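/- arXiv:math/0511553 — 3 statements merged into one kernel-verified Lean document; each statement's English description precedes it below -/
import Mathlib

section
/- The bracket [u,v] = Σ_{p∈I} x^{σ_p}·(∂_p(u)·∂_{p̄}(v) − ∂_{p̄}(u)·∂_p(v)) + (2−∂)(u)·∂₀(v) − ∂₀(u)·(2−∂)(v) on 𝒜 is skew-symmetric and satisfies the Jacobi identity; hence (𝒜, [·,·]) is a Lie algebra over F (the contact Lie algebra 𝒦 = 𝒦(ℓ⃗,σ,Γ,𝒥) in normalized form). -/
noncomputable section

/-- `ι_i = ℓ₁ + ⋯ + ℓ_i`. -/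
def iot (ℓ : ℕ → ℕ) (i : ℕ) : ℕ := ∑ k ∈ Finset.Icc 1 i, ℓ k

/-- `I_{i,j} = {ι_{i-1}+1, …, ι_j}`. -/
def iSet (ℓ : ℕ → ℕ) (i j : ℕ) : Finset ℕ := Finset.Icc (iot ℓ (i - 1) + 1) (iot ℓ j)

/-- The index-shift map `p ↦ p̄` (shift by `ι₆`). -/
def bar (ℓ : ℕ → ℕ) (p : ℕ) : ℕ := if p ≤ iot ℓ 6 then p + iot ℓ 6 else p - iot ℓ 6

/-- `K̄ = {p̄ : p ∈ K}`. -/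
def barSet (ℓ : ℕ → ℕ) (K : Finset ℕ) : Finset ℕ := K.image (bar ℓ)

/-- `J_{i,j} = I_{i,j} ∪ Ī_{i,j}`. -/
def jSet (ℓ : ℕ → ℕ) (i j : ℕ) : Finset ℕ := iSet ℓ i j ∪ barSet ℓ (iSet ℓ i j)

/-- The semigroup `𝒥 = 𝒥₀ × 𝒥₁`, encoded as functions `ℕ → ℕ`; `j0 = true`
means `𝒥₀ = ℕ` and `j0 = false` means `𝒥₀ = {0}`. -/
def jIdx (ℓ : ℕ → ℕ) (j0 : Bool) : Set (ℕ → ℕ) :=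
  {i | (j0 = false → i 0 = 0) ∧
    ∀ p, 1 ≤ p →
      (p ∈ iSet ℓ 1 2 ∪ iSet ℓ 4 4 ∪ barSet ℓ (iSet ℓ 1 1) ∨ 2 * iot ℓ 6 < p) → i p = 0}

/-- `σ_p` (with `σ_p = σ_{p̄}`). -/
def sgm (F : Type*) [Field F] (ℓ : ℕ → ℕ) (p : ℕ) : ℕ → F :=
  let q := if p ≤ iot ℓ 6 then p else p - iot ℓ 6
  if q ∈ iSet ℓ 1 3 then -Pi.single q (1 : F) - Pi.single (q + iot ℓ 6) (1 : F)
  else if q ∈ iSet ℓ 4 5 then -Pi.single q (1 : F)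
  else 0

/-- The underlying space `𝒜`: the free `F`-module with basis `Γ × 𝒥`. -/
abbrev CA (F : Type*) [Field F] (ℓ : ℕ → ℕ) (Γ : AddSubgroup (ℕ → F)) (j0 : Bool) : Type _ :=
  (↥Γ × ↥(jIdx ℓ j0)) →₀ F

/-- The basis monomial `x^{α,i⃗}`, with the convention that it is `0` if `(α,i⃗) ∉ Γ × 𝒥`. -/
def X (F : Type*) [Field F] (ℓ : ℕ → ℕ) (Γ : AddSubgroup (ℕ → F)) (j0 : Bool)
    (α : ℕ → F) (i : ℕ → ℕ) : CA F ℓ Γ j0 :=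
  @dite _ (α ∈ Γ ∧ i ∈ jIdx ℓ j0) (Classical.dec _)
    (fun h => Finsupp.single (⟨α, h.1⟩, ⟨i, h.2⟩) 1) (fun _ => 0)

variable (F : Type*) [Field F] (ℓ : ℕ → ℕ) (Γ : AddSubgroup (ℕ → F)) (j0 : Bool)

/-- The commutative associative product on `𝒜`. -/
def mulA (u v : CA F ℓ Γ j0) : CA F ℓ Γ j0 :=
  u.sum fun a ca => v.sum fun b cb =>
    (ca * cb) • X F ℓ Γ j0 (a.1.1 + b.1.1) (a.2.1 + b.2.1)

/-- The grading operator `∂*_p`. -/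
def pstar (p : ℕ) (u : CA F ℓ Γ j0) : CA F ℓ Γ j0 :=
  u.sum fun a ca => (ca * a.1.1 p) • Finsupp.single a 1

/-- The down-grading operator `∂_{t_p}`. -/
def pt (p : ℕ) (u : CA F ℓ Γ j0) : CA F ℓ Γ j0 :=
  u.sum fun a ca => (ca * (a.2.1 p : F)) • X F ℓ Γ j0 a.1.1 (a.2.1 - Pi.single p 1)

/-- `∂_p = ∂*_p + ∂_{t_p}`. -/
def dd (p : ℕ) (u : CA F ℓ Γ j0) : CA F ℓ Γ j0 := pstar F ℓ Γ j0 p u + pt F ℓ Γ j0 p u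

/-- `∂ = Σ_{p∈J_{1,3}∪I_{4,5}} ∂*_p + Σ_{p∈I₆∪Ī_{4,6}} t_p ∂_{t_p}`. -/
def Dop (u : CA F ℓ Γ j0) : CA F ℓ Γ j0 :=
  (∑ p ∈ jSet ℓ 1 3 ∪ iSet ℓ 4 5, pstar F ℓ Γ j0 p u) +
    ∑ p ∈ iSet ℓ 6 6 ∪ barSet ℓ (iSet ℓ 4 6),
      mulA F ℓ Γ j0 (X F ℓ Γ j0 0 (Pi.single p 1)) (pt F ℓ Γ j0 p u)

/-- The contact bracket (2.18):
`[u,v] = Σ_{p∈I} x^{σ_p}(∂_p u·∂_{p̄} v − ∂_{p̄} u·∂_p v) + (2−∂)(u)·∂₀(v) − ∂₀(u)·(2−∂)(v)`. -/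
def brk (u v : CA F ℓ Γ j0) : CA F ℓ Γ j0 :=
  (∑ p ∈ iSet ℓ 1 6,
      mulA F ℓ Γ j0 (X F ℓ Γ j0 (sgm F ℓ p) 0)
        (mulA F ℓ Γ j0 (dd F ℓ Γ j0 p u) (dd F ℓ Γ j0 (bar ℓ p) v) -
          mulA F ℓ Γ j0 (dd F ℓ Γ j0 (bar ℓ p) u) (dd F ℓ Γ j0 p v))) +
    mulA F ℓ Γ j0 ((2 : F) • u - Dop F ℓ Γ j0 u) (dd F ℓ Γ j0 0 v) -
    mulA F ℓ Γ j0 (dd F ℓ Γ j0 0 u) ((2 : F) • v - Dop F ℓ Γ j0 v)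


namespace ContactAux

structure CSys (K : Type*) (A : Type*) [Field K] [CommRing A] [Algebra K A] where
  S : Finset ℕ
  a : ℕ → A →ₗ[K] A
  b : ℕ → A →ₗ[K] A
  d0 : A →ₗ[K] A
  del : A →ₗ[K] A
  w : ℕ → A
  e : ℕ → K
  e' : ℕ → K
  hda : ∀ p ∈ S, ∀ u v : A, a p (u*v) = a p u * v + u * a p v
  hdb : ∀ p ∈ S, ∀ u v : A, b p (u*v) = b p u * v + u * b p v
  hd0 : ∀ u v : A, d0 (u*v) = d0 u * v + u * d0 v
  hdd : ∀ u v : A, del (u*v) = del u * v + u * del v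
  haa : ∀ p ∈ S, ∀ q ∈ S, ∀ u, a p (a q u) = a q (a p u)
  hab : ∀ p ∈ S, ∀ q ∈ S, ∀ u, a p (b q u) = b q (a p u)
  hbb : ∀ p ∈ S, ∀ q ∈ S, ∀ u, b p (b q u) = b q (b p u)
  ha0 : ∀ p ∈ S, ∀ u, a p (d0 u) = d0 (a p u)
  hb0 : ∀ p ∈ S, ∀ u, b p (d0 u) = d0 (b p u)
  hadel : ∀ p ∈ S, ∀ u, a p (del u) = del (a p u) + e p • a p u
  hbdel : ∀ p ∈ S, ∀ u, b p (del u) = del (b p u) + e' p • b p u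
  h0del : ∀ u, d0 (del u) = del (d0 u)
  hwa : ∀ p ∈ S, ∀ q ∈ S, a q (w p) = (if q = p then e p - 1 else 0) • w p
  hwb : ∀ p ∈ S, ∀ q ∈ S, b q (w p) = (if q = p then e' p - 1 else 0) • w p
  hw0 : ∀ p ∈ S, d0 (w p) = 0
  hwdel : ∀ p ∈ S, del (w p) = (e p + e' p - 2) • w p

set_option linter.unusedSectionVars false
variable {K A : Type*} [Field K] [CharZero K] [CommRing A] [Algebra K A] (C : CSys K A)

def CSys.TT (p : ℕ) (u v : A) : A := C.a p u * C.b p v - C.b p u * C.a p v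
def CSys.PP (u v : A) : A := ∑ p ∈ C.S, C.w p * C.TT p u v
def CSys.QQ (u v : A) : A := ((2:K)•u - C.del u) * C.d0 v - C.d0 u * ((2:K)•v - C.del v)
def CSys.BB (u v : A) : A := C.PP u v + C.QQ u v
def CSys.RA (p : ℕ) (u v : A) : A := C.a p u * C.d0 v - C.d0 u * C.a p v
def CSys.RB (p : ℕ) (u v : A) : A := C.b p u * C.d0 v - C.d0 u * C.b p v

lemma CSys.aTT {q : ℕ} (hq : q ∈ C.S) {p : ℕ} (hp : p ∈ C.S) (u v : A) :
    C.a q (C.TT p u v) = C.TT p (C.a q u) v + C.TT p u (C.a q v) := by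
  simp only [CSys.TT, map_sub, C.hda q hq, C.haa q hq p hp, C.hab q hq p hp]
  ring

lemma CSys.bTT {q : ℕ} (hq : q ∈ C.S) {p : ℕ} (hp : p ∈ C.S) (u v : A) :
    C.b q (C.TT p u v) = C.TT p (C.b q u) v + C.TT p u (C.b q v) := by
  simp only [CSys.TT, map_sub, C.hdb q hq, ← C.hab p hp q hq, C.hbb q hq p hp]
  ring

lemma CSys.d0TT {p : ℕ} (hp : p ∈ C.S) (u v : A) :
    C.d0 (C.TT p u v) = C.TT p (C.d0 u) v + C.TT p u (C.d0 v) := by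
  simp only [CSys.TT, map_sub, C.hd0, C.ha0 p hp, C.hb0 p hp]
  ring

lemma CSys.delTT {p : ℕ} (hp : p ∈ C.S) (u v : A) :
    C.del (C.TT p u v) =
      C.TT p (C.del u) v + C.TT p u (C.del v) - (C.e p + C.e' p) • C.TT p u v := by
  simp only [CSys.TT, map_sub, C.hdd, C.hadel p hp, C.hbdel p hp, Algebra.smul_def, map_add]
  ring

lemma CSys.aPP {q : ℕ} (hq : q ∈ C.S) (u v : A) :
    C.a q (C.PP u v) =
      C.PP (C.a q u) v + C.PP u (C.a q v) + (C.e q - 1) • (C.w q * C.TT q u v) := by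
  simp only [CSys.PP, map_sum]
  have step : ∀ p ∈ C.S, C.a q (C.w p * C.TT p u v) =
      (C.w p * C.TT p (C.a q u) v + C.w p * C.TT p u (C.a q v)) +
        (if q = p then (C.e p - 1) • (C.w p * C.TT p u v) else 0) := by
    intro p hp
    rw [C.hda q hq, C.aTT hq hp, C.hwa p hp q hq]
    split <;> simp [smul_mul_assoc, mul_add] <;> ring
  rw [Finset.sum_congr rfl step, Finset.sum_add_distrib, Finset.sum_add_distrib,
    Finset.sum_ite_eq C.S q (fun p => (C.e p - 1) • (C.w p * C.TT p u v)), if_pos hq]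

lemma CSys.bPP {q : ℕ} (hq : q ∈ C.S) (u v : A) :
    C.b q (C.PP u v) =
      C.PP (C.b q u) v + C.PP u (C.b q v) + (C.e' q - 1) • (C.w q * C.TT q u v) := by
  simp only [CSys.PP, map_sum]
  have step : ∀ p ∈ C.S, C.b q (C.w p * C.TT p u v) =
      (C.w p * C.TT p (C.b q u) v + C.w p * C.TT p u (C.b q v)) +
        (if q = p then (C.e' p - 1) • (C.w p * C.TT p u v) else 0) := by
    intro p hp
    rw [C.hdb q hq, C.bTT hq hp, C.hwb p hp q hq]
    split <;> simp [smul_mul_assoc, mul_add] <;> ring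
  rw [Finset.sum_congr rfl step, Finset.sum_add_distrib, Finset.sum_add_distrib,
    Finset.sum_ite_eq C.S q (fun p => (C.e' p - 1) • (C.w p * C.TT p u v)), if_pos hq]

lemma CSys.d0PP (u v : A) :
    C.d0 (C.PP u v) = C.PP (C.d0 u) v + C.PP u (C.d0 v) := by
  simp only [CSys.PP, map_sum, ← Finset.sum_add_distrib]
  refine Finset.sum_congr rfl fun p hp => ?_
  rw [C.hd0, C.hw0 p hp, C.d0TT hp]
  ring

lemma CSys.delPP (u v : A) :
    C.del (C.PP u v) = C.PP (C.del u) v + C.PP u (C.del v) - (2:K) • C.PP u v := by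
  simp only [CSys.PP, map_sum, Finset.smul_sum, ← Finset.sum_add_distrib, ← Finset.sum_sub_distrib]
  refine Finset.sum_congr rfl fun p hp => ?_
  rw [C.hdd, C.delTT hp, C.hwdel p hp]
  simp only [Algebra.smul_def, map_add, map_sub, map_ofNat]
  ring


lemma CSys.aQQ {q : ℕ} (hq : q ∈ C.S) (u v : A) :
    C.a q (C.QQ u v) = C.QQ (C.a q u) v + C.QQ u (C.a q v) - C.e q • C.RA q u v := by
  simp only [CSys.QQ, CSys.RA, map_sub, map_smul, C.hda q hq, C.ha0 q hq, C.hadel q hq]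
  simp only [Algebra.smul_def, map_add, map_sub, map_ofNat, map_one]
  ring

lemma CSys.bQQ {q : ℕ} (hq : q ∈ C.S) (u v : A) :
    C.b q (C.QQ u v) = C.QQ (C.b q u) v + C.QQ u (C.b q v) - C.e' q • C.RB q u v := by
  simp only [CSys.QQ, CSys.RB, map_sub, map_smul, C.hdb q hq, C.hb0 q hq, C.hbdel q hq]
  simp only [Algebra.smul_def, map_add, map_sub, map_ofNat, map_one]
  ring

lemma CSys.d0QQ (u v : A) :
    C.d0 (C.QQ u v) = C.QQ (C.d0 u) v + C.QQ u (C.d0 v) := by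
  simp only [CSys.QQ, map_sub, map_smul, C.hd0, C.h0del]
  simp only [Algebra.smul_def, map_ofNat]
  ring

lemma CSys.delQQ (u v : A) :
    C.del (C.QQ u v) = C.QQ (C.del u) v + C.QQ u (C.del v) := by
  simp only [CSys.QQ, map_sub, map_smul, C.hdd, C.h0del]
  simp only [Algebra.smul_def, map_ofNat]
  ring

lemma CSys.aBB {q : ℕ} (hq : q ∈ C.S) (u v : A) :
    C.a q (C.BB u v) = C.PP (C.a q u) v + C.PP u (C.a q v) + (C.QQ (C.a q u) v
      + C.QQ u (C.a q v) + ((C.e q - 1) • (C.w q * C.TT q u v) - C.e q • C.RA q u v)) := by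
  simp only [CSys.BB, map_add, C.aPP hq, C.aQQ hq]; abel

lemma CSys.bBB {q : ℕ} (hq : q ∈ C.S) (u v : A) :
    C.b q (C.BB u v) = C.PP (C.b q u) v + C.PP u (C.b q v) + (C.QQ (C.b q u) v
      + C.QQ u (C.b q v) + ((C.e' q - 1) • (C.w q * C.TT q u v) - C.e' q • C.RB q u v)) := by
  simp only [CSys.BB, map_add, C.bPP hq, C.bQQ hq]; abel

lemma CSys.d0BB (u v : A) :
    C.d0 (C.BB u v) = C.PP (C.d0 u) v + C.PP u (C.d0 v) + C.QQ (C.d0 u) v + C.QQ u (C.d0 v) := by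
  simp only [CSys.BB, map_add, C.d0PP, C.d0QQ]; abel

lemma CSys.delBB (u v : A) :
    C.del (C.BB u v) = C.PP (C.del u) v + C.PP u (C.del v) - (2:K) • C.PP u v
      + C.QQ (C.del u) v + C.QQ u (C.del v) := by
  simp only [CSys.BB, map_add, C.delPP, C.delQQ]; abel

def CSys.DBL (q p : ℕ) (u v z : A) : A :=
  C.w q * (C.w p * ((C.TT p (C.a q u) v + C.TT p u (C.a q v)) * C.b q z
    - (C.TT p (C.b q u) v + C.TT p u (C.b q v)) * C.a q z))

def CSys.SNG1 (q : ℕ) (u v z : A) : A :=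
  (C.QQ (C.a q u) v + C.QQ u (C.a q v) + ((C.e q - 1) • (C.w q * C.TT q u v)
      - C.e q • C.RA q u v)) * C.b q z
  - (C.QQ (C.b q u) v + C.QQ u (C.b q v) + ((C.e' q - 1) • (C.w q * C.TT q u v)
      - C.e' q • C.RB q u v)) * C.a q z

def CSys.SNG2 (q : ℕ) (u v z : A) : A :=
  (C.TT q ((2:K)•u - C.del u) v + C.TT q u ((2:K)•v - C.del v)) * C.d0 z
  - (C.TT q (C.d0 u) v + C.TT q u (C.d0 v)) * ((2:K)•z - C.del z)

def CSys.FREE (u v z : A) : A :=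
  (C.QQ ((2:K)•u - C.del u) v + C.QQ u ((2:K)•v - C.del v) - (2:K) • C.QQ u v) * C.d0 z
  - (C.QQ (C.d0 u) v + C.QQ u (C.d0 v)) * ((2:K)•z - C.del z)


lemma helper (s : Finset ℕ) (f1 f2 f3 f4 : ℕ → A) (W Ya Yb Bz Az : A) :
    W * ((∑ p ∈ s, f1 p + ∑ p ∈ s, f2 p + Ya) * Bz - (∑ p ∈ s, f3 p + ∑ p ∈ s, f4 p + Yb) * Az)
      = (∑ p ∈ s, W * ((f1 p + f2 p) * Bz - (f3 p + f4 p) * Az)) + W * (Ya * Bz - Yb * Az) := by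
  simp only [← Finset.sum_add_distrib]
  have h1 : (∑ p ∈ s, W * ((f1 p + f2 p) * Bz - (f3 p + f4 p) * Az))
      = W * ((∑ p ∈ s, (f1 p + f2 p)) * Bz) - W * ((∑ p ∈ s, (f3 p + f4 p)) * Az) := by
    rw [Finset.sum_mul, Finset.sum_mul, Finset.mul_sum, Finset.mul_sum, ← Finset.sum_sub_distrib]
    exact Finset.sum_congr rfl fun p _ => by ring
  rw [h1]; ring

lemma helper2 (s : Finset ℕ) (g1 g2 g3 g4 : ℕ → A) (w : ℕ → A) (Bz Az : A) :
    ∑ q ∈ s, w q * ((g1 q + g2 q) * Bz - (g3 q + g4 q) * Az)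
      = (∑ q ∈ s, w q * g1 q + ∑ q ∈ s, w q * g2 q) * Bz
        - (∑ q ∈ s, w q * g3 q + ∑ q ∈ s, w q * g4 q) * Az := by
  rw [← Finset.sum_add_distrib, ← Finset.sum_add_distrib, Finset.sum_mul, Finset.sum_mul,
    ← Finset.sum_sub_distrib]
  exact Finset.sum_congr rfl fun q _ => by ring

lemma CSys.PPlin1 (x y v : A) : C.PP ((2:K)•x - y) v = (2:K)•(C.PP x v) - C.PP y v := by
  simp only [CSys.PP, CSys.TT, map_sub, map_smul, Finset.smul_sum, ← Finset.sum_sub_distrib]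
  refine Finset.sum_congr rfl fun p _ => ?_
  simp only [Algebra.smul_def, map_ofNat]; ring

lemma CSys.PPlin2 (u x y : A) : C.PP u ((2:K)•x - y) = (2:K)•(C.PP u x) - C.PP u y := by
  simp only [CSys.PP, CSys.TT, map_sub, map_smul, Finset.smul_sum, ← Finset.sum_sub_distrib]
  refine Finset.sum_congr rfl fun p _ => ?_
  simp only [Algebra.smul_def, map_ofNat]; ring

lemma CSys.QQlin1 (x y v : A) : C.QQ ((2:K)•x - y) v = (2:K)•(C.QQ x v) - C.QQ y v := by
  simp only [CSys.QQ, map_sub, map_smul]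
  simp only [Algebra.smul_def, map_ofNat]; ring

lemma CSys.QQlin2 (u x y : A) : C.QQ u ((2:K)•x - y) = (2:K)•(C.QQ u x) - C.QQ u y := by
  simp only [CSys.QQ, map_sub, map_smul]
  simp only [Algebra.smul_def, map_ofNat]; ring

lemma CSys.perq {q : ℕ} (hq : q ∈ C.S) (u v z : A) :
    C.w q * C.TT q (C.BB u v) z = (∑ p ∈ C.S, C.DBL q p u v z) + C.w q * C.SNG1 q u v z := by
  rw [show C.TT q (C.BB u v) z
      = C.a q (C.BB u v) * C.b q z - C.b q (C.BB u v) * C.a q z from rfl,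
    C.aBB hq, C.bBB hq,
    show C.PP (C.a q u) v = ∑ p ∈ C.S, C.w p * C.TT p (C.a q u) v from rfl,
    show C.PP u (C.a q v) = ∑ p ∈ C.S, C.w p * C.TT p u (C.a q v) from rfl,
    show C.PP (C.b q u) v = ∑ p ∈ C.S, C.w p * C.TT p (C.b q u) v from rfl,
    show C.PP u (C.b q v) = ∑ p ∈ C.S, C.w p * C.TT p u (C.b q v) from rfl,
    helper]
  refine congrArg₂ (· + ·) (Finset.sum_congr rfl fun p _ => ?_) rfl
  simp only [CSys.DBL]; ring

lemma CSys.qqpart (u v z : A) :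
    C.QQ (C.BB u v) z = (∑ q ∈ C.S, C.w q * C.SNG2 q u v z) + C.FREE u v z := by
  have h2 : (∑ q ∈ C.S, C.w q * C.SNG2 q u v z)
      = (C.PP ((2:K)•u - C.del u) v + C.PP u ((2:K)•v - C.del v)) * C.d0 z
        - (C.PP (C.d0 u) v + C.PP u (C.d0 v)) * ((2:K)•z - C.del z) := by
    simp only [CSys.SNG2]
    rw [helper2]
    rfl
  rw [show C.QQ (C.BB u v) z = ((2:K)•(C.BB u v) - C.del (C.BB u v)) * C.d0 z
      - C.d0 (C.BB u v) * ((2:K)•z - C.del z) from rfl, C.delBB, C.d0BB, h2]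
  simp only [CSys.BB, CSys.FREE, smul_add, C.PPlin1, C.PPlin2, C.QQlin1, C.QQlin2]
  simp only [Algebra.smul_def, map_ofNat]; ring

lemma CSys.expand (u v z : A) :
    C.BB (C.BB u v) z = (∑ q ∈ C.S, ∑ p ∈ C.S, C.DBL q p u v z)
      + (∑ q ∈ C.S, C.w q * C.SNG1 q u v z)
      + ((∑ q ∈ C.S, C.w q * C.SNG2 q u v z) + C.FREE u v z) := by
  rw [show C.BB (C.BB u v) z = C.PP (C.BB u v) z + C.QQ (C.BB u v) z from rfl, C.qqpart,
    show C.PP (C.BB u v) z = ∑ q ∈ C.S, C.w q * C.TT q (C.BB u v) z from rfl,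
    Finset.sum_congr rfl (fun q hq => C.perq hq u v z), Finset.sum_add_distrib]

lemma CSys.dbl_anti {q p : ℕ} (hq : q ∈ C.S) (hp : p ∈ C.S) (u v z : A) :
    (C.DBL q p u v z + C.DBL q p v z u + C.DBL q p z u v)
      + (C.DBL p q u v z + C.DBL p q v z u + C.DBL p q z u v) = 0 := by
  simp only [CSys.DBL, CSys.TT]
  simp only [C.hab q hq p hp, C.hbb q hq p hp, ← C.haa p hp q hq, ← C.hab p hp q hq]
  ring

lemma smul_cancel {K A : Type*} [Field K] [CharZero K] [AddCommGroup A] [Module K A]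
    {X : A} (h : X + X = 0) : X = 0 := by
  have h2 : (2:K) • X = 0 := by rw [two_smul]; exact h
  rcases smul_eq_zero.mp h2 with h'|h'
  · exact absurd h' two_ne_zero
  · exact h'

lemma CSys.dblsum (u v z : A) :
    (∑ q ∈ C.S, ∑ p ∈ C.S, (C.DBL q p u v z + C.DBL q p v z u + C.DBL q p z u v)) = 0 := by
  apply smul_cancel (K := K)
  nth_rewrite 2 [Finset.sum_comm]
  rw [← Finset.sum_add_distrib]
  refine Finset.sum_eq_zero fun q hq => ?_
  rw [← Finset.sum_add_distrib]
  exact Finset.sum_eq_zero fun p hp => C.dbl_anti hq hp u v z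

lemma CSys.sng_cyc {q : ℕ} (hq : q ∈ C.S) (u v z : A) :
    (C.SNG1 q u v z + C.SNG2 q u v z) + (C.SNG1 q v z u + C.SNG2 q v z u)
      + (C.SNG1 q z u v + C.SNG2 q z u v) = 0 := by
  simp only [CSys.SNG1, CSys.SNG2, CSys.QQ, CSys.TT, CSys.RA, CSys.RB, map_sub, map_smul,
    C.hadel q hq, C.hbdel q hq, C.ha0 q hq, C.hb0 q hq]
  simp only [Algebra.smul_def, map_sub, map_add, map_one, map_ofNat]
  ring

lemma CSys.free_cyc (u v z : A) :
    C.FREE u v z + C.FREE v z u + C.FREE z u v = 0 := by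
  simp only [CSys.FREE, CSys.QQ, map_sub, map_smul, C.h0del]
  simp only [Algebra.smul_def, map_ofNat]
  ring

theorem CSys.jacobi (u v z : A) :
    C.BB (C.BB u v) z + C.BB (C.BB v z) u + C.BB (C.BB z u) v = 0 := by
  have hD : (∑ q ∈ C.S, ∑ p ∈ C.S, C.DBL q p u v z)
      + (∑ q ∈ C.S, ∑ p ∈ C.S, C.DBL q p v z u)
      + (∑ q ∈ C.S, ∑ p ∈ C.S, C.DBL q p z u v) = 0 := by
    have h := C.dblsum u v z
    simp only [Finset.sum_add_distrib] at h
    exact h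
  have hS : (∑ q ∈ C.S, C.w q * C.SNG1 q u v z) + (∑ q ∈ C.S, C.w q * C.SNG2 q u v z)
      + ((∑ q ∈ C.S, C.w q * C.SNG1 q v z u) + (∑ q ∈ C.S, C.w q * C.SNG2 q v z u))
      + ((∑ q ∈ C.S, C.w q * C.SNG1 q z u v) + (∑ q ∈ C.S, C.w q * C.SNG2 q z u v)) = 0 := by
    have h : ∑ q ∈ C.S, (C.w q * C.SNG1 q u v z + C.w q * C.SNG2 q u v z
        + (C.w q * C.SNG1 q v z u + C.w q * C.SNG2 q v z u)
        + (C.w q * C.SNG1 q z u v + C.w q * C.SNG2 q z u v)) = 0 :=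
      Finset.sum_eq_zero fun q hq => by
        have h0 := C.sng_cyc hq u v z
        linear_combination C.w q * h0
    simp only [Finset.sum_add_distrib] at h
    linear_combination h
  have hF := C.free_cyc u v z
  rw [C.expand u v z, C.expand v z u, C.expand z u v]
  linear_combination hD + hS + hF

lemma CSys.skew (u v : A) : C.BB u v = - C.BB v u := by
  have h : ∑ p ∈ C.S, (C.w p * C.TT p u v + C.w p * C.TT p v u) = 0 :=
    Finset.sum_eq_zero fun p _ => by simp only [CSys.TT]; ring
  simp only [Finset.sum_add_distrib] at h
  simp only [CSys.BB, CSys.PP, CSys.QQ]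
  linear_combination h

end ContactAux

-- ======================== concrete instantiation ========================

namespace ContactConcrete
open ContactAux

variable {F ℓ Γ j0}

lemma mem_jIdx_zero : (0 : ℕ → ℕ) ∈ jIdx ℓ j0 :=
  ⟨fun _ => rfl, fun _ _ _ => rfl⟩

lemma mem_jIdx_add {i j : ℕ → ℕ} (hi : i ∈ jIdx ℓ j0) (hj : j ∈ jIdx ℓ j0) :
    i + j ∈ jIdx ℓ j0 := by
  refine ⟨fun hf => ?_, fun p h1 h2 => ?_⟩
  · simp [Pi.add_apply, hi.1 hf, hj.1 hf]
  · simp [Pi.add_apply, hi.2 p h1 h2, hj.2 p h1 h2]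

lemma mem_jIdx_sub {i : ℕ → ℕ} (hi : i ∈ jIdx ℓ j0) (p : ℕ) :
    i - Pi.single p 1 ∈ jIdx ℓ j0 := by
  refine ⟨fun hf => ?_, fun q h1 h2 => ?_⟩
  · simp [Pi.sub_apply, hi.1 hf]
  · simp [Pi.sub_apply, hi.2 q h1 h2]

instance : Zero ↥(jIdx ℓ j0) := ⟨⟨0, mem_jIdx_zero⟩⟩
instance : Add ↥(jIdx ℓ j0) := ⟨fun x y => ⟨x.1 + y.1, mem_jIdx_add x.2 y.2⟩⟩

instance : AddCommMonoid ↥(jIdx ℓ j0) where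
  add_assoc x y z := Subtype.ext (add_assoc x.1 y.1 z.1)
  zero_add x := Subtype.ext (zero_add x.1)
  add_zero x := Subtype.ext (add_zero x.1)
  add_comm x y := Subtype.ext (add_comm x.1 y.1)
  nsmul := nsmulRec

variable (ℓ Γ j0) in
def dwn (p : ℕ) (m : ↥Γ × ↥(jIdx ℓ j0)) : ↥Γ × ↥(jIdx ℓ j0) :=
  (m.1, ⟨m.2.1 - Pi.single p 1, mem_jIdx_sub m.2.2 p⟩)

@[simp] lemma dwn_fst (p : ℕ) (m : (↥Γ × ↥(jIdx ℓ j0))) : (dwn ℓ Γ j0 p m).1 = m.1 := rfl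
@[simp] lemma dwn_snd (p : ℕ) (m : (↥Γ × ↥(jIdx ℓ j0))) (q : ℕ) :
    ((dwn ℓ Γ j0 p m).2 : ℕ → ℕ) q = (m.2 : ℕ → ℕ) q - (Pi.single p 1 : ℕ → ℕ) q := rfl
@[simp] lemma madd_fst (m m' : (↥Γ × ↥(jIdx ℓ j0))) (q : ℕ) :
    ((m + m').1 : ℕ → F) q = (m.1 : ℕ → F) q + (m'.1 : ℕ → F) q := rfl
@[simp] lemma madd_snd (m m' : (↥Γ × ↥(jIdx ℓ j0))) (q : ℕ) :
    ((m + m').2 : ℕ → ℕ) q = (m.2 : ℕ → ℕ) q + (m'.2 : ℕ → ℕ) q := rfl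

lemma meq (m m' : (↥Γ × ↥(jIdx ℓ j0))) (h1 : m.1 = m'.1) (h2 : ∀ q, (m.2 : ℕ → ℕ) q = (m'.2 : ℕ → ℕ) q) :
    m = m' := Prod.ext h1 (Subtype.ext (funext h2))

lemma dwn_eq_self {p : ℕ} {m : (↥Γ × ↥(jIdx ℓ j0))} (h : (m.2 : ℕ → ℕ) p = 0) :
    dwn ℓ Γ j0 p m = m := by
  refine meq _ _ rfl fun q => ?_
  rw [dwn_snd]
  rcases eq_or_ne q p with rfl | hq
  · rw [Pi.single_eq_same]; omega
  · rw [Pi.single_eq_of_ne hq]; omega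

lemma dwn_add_left {p : ℕ} {m m' : (↥Γ × ↥(jIdx ℓ j0))} (h : (m.2 : ℕ → ℕ) p ≠ 0) :
    dwn ℓ Γ j0 p (m + m') = dwn ℓ Γ j0 p m + m' := by
  refine meq _ _ rfl fun q => ?_
  rw [dwn_snd, madd_snd, madd_snd, dwn_snd]
  rcases eq_or_ne q p with rfl | hq
  · rw [Pi.single_eq_same]; omega
  · rw [Pi.single_eq_of_ne hq]; omega

lemma dwn_add_right {p : ℕ} {m m' : (↥Γ × ↥(jIdx ℓ j0))} (h : (m'.2 : ℕ → ℕ) p ≠ 0) :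
    dwn ℓ Γ j0 p (m + m') = m + dwn ℓ Γ j0 p m' := by
  rw [add_comm m m', dwn_add_left h, add_comm]

lemma dwn_add_both {p : ℕ} {m m' : (↥Γ × ↥(jIdx ℓ j0))} (h : (m.2 : ℕ → ℕ) p ≠ 0) (h' : (m'.2 : ℕ → ℕ) p ≠ 0) :
    dwn ℓ Γ j0 p m + m' = m + dwn ℓ Γ j0 p m' := by
  refine meq _ _ rfl fun q => ?_
  rw [madd_snd, madd_snd, dwn_snd, dwn_snd]
  rcases eq_or_ne q p with rfl | hq
  · rw [Pi.single_eq_same]; omega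
  · rw [Pi.single_eq_of_ne hq]; omega

lemma dwn_comm (p q : ℕ) (m : (↥Γ × ↥(jIdx ℓ j0))) :
    dwn ℓ Γ j0 p (dwn ℓ Γ j0 q m) = dwn ℓ Γ j0 q (dwn ℓ Γ j0 p m) := by
  refine meq _ _ rfl fun r => ?_
  rw [dwn_snd, dwn_snd, dwn_snd, dwn_snd]
  omega

variable (F ℓ Γ j0) in
def ddL (p : ℕ) : (AddMonoidAlgebra F (↥Γ × ↥(jIdx ℓ j0))) →ₗ[F] (AddMonoidAlgebra F (↥Γ × ↥(jIdx ℓ j0))) :=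
  Finsupp.lsum F (fun m => LinearMap.toSpanSingleton F _
    (AddMonoidAlgebra.single m ((m.1 : ℕ → F) p) + AddMonoidAlgebra.single (dwn ℓ Γ j0 p m) (((m.2 : ℕ → ℕ) p : F))))
    ∘ₗ (AddMonoidAlgebra.coeffLinearEquiv F).toLinearMap

lemma ddL_single (p : ℕ) (m : (↥Γ × ↥(jIdx ℓ j0))) (c : F) :
    ddL F ℓ Γ j0 p (AddMonoidAlgebra.single m c)
      = AddMonoidAlgebra.single m (c * (m.1 : ℕ → F) p)
        + AddMonoidAlgebra.single (dwn ℓ Γ j0 p m) (c * ((m.2 : ℕ → ℕ) p : F)) := by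
  refine (Finsupp.lsum_single (S := F) _ m c).trans ?_
  rw [LinearMap.toSpanSingleton_apply, smul_add, AddMonoidAlgebra.smul_single, AddMonoidAlgebra.smul_single,
    smul_eq_mul, smul_eq_mul]

variable (F ℓ Γ j0) in
def dval (m : ↥Γ × ↥(jIdx ℓ j0)) : F :=
  (∑ p ∈ jSet ℓ 1 3 ∪ iSet ℓ 4 5, (m.1 : ℕ → F) p)
    + ∑ p ∈ iSet ℓ 6 6 ∪ barSet ℓ (iSet ℓ 4 6), (((m.2 : ℕ → ℕ) p : F))

variable (F ℓ Γ j0) in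
def DopL : (AddMonoidAlgebra F (↥Γ × ↥(jIdx ℓ j0))) →ₗ[F] (AddMonoidAlgebra F (↥Γ × ↥(jIdx ℓ j0))) :=
  Finsupp.lsum F (fun m => LinearMap.toSpanSingleton F _ (AddMonoidAlgebra.single m (dval F ℓ Γ j0 m)))
    ∘ₗ (AddMonoidAlgebra.coeffLinearEquiv F).toLinearMap

lemma DopL_single (m : (↥Γ × ↥(jIdx ℓ j0))) (c : F) :
    DopL F ℓ Γ j0 (AddMonoidAlgebra.single m c) = AddMonoidAlgebra.single m (c * dval F ℓ Γ j0 m) := by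
  refine (Finsupp.lsum_single (S := F) _ m c).trans ?_
  rw [LinearMap.toSpanSingleton_apply, AddMonoidAlgebra.smul_single, smul_eq_mul]

lemma sgl_mul (m m' : (↥Γ × ↥(jIdx ℓ j0))) (c c' : F) :
    (AddMonoidAlgebra.single m c : AddMonoidAlgebra F (↥Γ × ↥(jIdx ℓ j0)))
        * AddMonoidAlgebra.single m' c' = AddMonoidAlgebra.single (m + m') (c * c') :=
  AddMonoidAlgebra.single_mul_single _ _ _ _

lemma ddL_mul (p : ℕ) (u v : (AddMonoidAlgebra F (↥Γ × ↥(jIdx ℓ j0)))) :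
    ddL F ℓ Γ j0 p (u * v) = ddL F ℓ Γ j0 p u * v + u * ddL F ℓ Γ j0 p v := by
  induction u using AddMonoidAlgebra.induction_linear with
  | zero => simp
  | add f g hf hg => rw [add_mul, map_add, hf, hg, map_add, add_mul]; ring
  | single m c =>
    induction v using AddMonoidAlgebra.induction_linear with
    | zero => simp
    | add f g hf hg => rw [mul_add, map_add, hf, hg, map_add, mul_add]; ring
    | single m' c' =>
      rw [sgl_mul, ddL_single, ddL_single, ddL_single, add_mul, mul_add,
        sgl_mul, sgl_mul, sgl_mul, sgl_mul, madd_fst, madd_snd]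
      push_cast
      rw [mul_add (c * c'), mul_add (c * c'), AddMonoidAlgebra.single_add, AddMonoidAlgebra.single_add]
      have key : AddMonoidAlgebra.single (dwn ℓ Γ j0 p (m + m')) (c * c' * ((m.2 : ℕ → ℕ) p : F))
            + AddMonoidAlgebra.single (dwn ℓ Γ j0 p (m + m')) (c * c' * ((m'.2 : ℕ → ℕ) p : F))
          = AddMonoidAlgebra.single (dwn ℓ Γ j0 p m + m') (c * ((m.2 : ℕ → ℕ) p : F) * c')
            + AddMonoidAlgebra.single (m + dwn ℓ Γ j0 p m') (c * (c' * ((m'.2 : ℕ → ℕ) p : F))) := by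
        rw [← AddMonoidAlgebra.single_add]
        rcases Nat.eq_zero_or_pos ((m.2 : ℕ → ℕ) p) with h1 | h1 <;>
          rcases Nat.eq_zero_or_pos ((m'.2 : ℕ → ℕ) p) with h2 | h2
        · simp [h1, h2]
        · rw [dwn_add_right (by omega), h1]
          push_cast
          simp only [mul_zero, zero_mul, zero_add, add_zero, AddMonoidAlgebra.single_zero]
          congr 1; ring
        · rw [dwn_add_left (by omega), h2]
          push_cast
          simp only [mul_zero, zero_mul, zero_add, add_zero, AddMonoidAlgebra.single_zero]
          congr 1; ring
        · rw [dwn_add_left (by omega), AddMonoidAlgebra.single_add, dwn_add_both (by omega) (by omega)]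
          congr 1 <;> ring_nf
      rw [key]
      rw [show c * c' * ((m.1 : ℕ → F) p) = c * (m.1 : ℕ → F) p * c' from by ring,
        show c * c' * ((m'.1 : ℕ → F) p) = c * (c' * (m'.1 : ℕ → F) p) from by ring]
      simp only [AddMonoidAlgebra.single]
      abel

lemma ddL_comm (p q : ℕ) (u : AddMonoidAlgebra F (↥Γ × ↥(jIdx ℓ j0))) :
    ddL F ℓ Γ j0 p (ddL F ℓ Γ j0 q u) = ddL F ℓ Γ j0 q (ddL F ℓ Γ j0 p u) := by
  induction u using AddMonoidAlgebra.induction_linear with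
  | zero => simp
  | add f g hf hg => simp only [map_add, hf, hg]
  | single m c =>
    rcases eq_or_ne p q with rfl | hpq
    · rfl
    · have e1 : ((dwn ℓ Γ j0 q m).2 : ℕ → ℕ) p = (m.2 : ℕ → ℕ) p := by
        rw [dwn_snd, Pi.single_eq_of_ne hpq, Nat.sub_zero]
      have e2 : ((dwn ℓ Γ j0 p m).2 : ℕ → ℕ) q = (m.2 : ℕ → ℕ) q := by
        rw [dwn_snd, Pi.single_eq_of_ne hpq.symm, Nat.sub_zero]
      have e3 : ((dwn ℓ Γ j0 q m).1 : ℕ → F) = (m.1 : ℕ → F) := rfl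
      have e4 : ((dwn ℓ Γ j0 p m).1 : ℕ → F) = (m.1 : ℕ → F) := rfl
      rw [ddL_single, map_add, ddL_single, ddL_single, ddL_single, map_add, ddL_single, ddL_single,
        e1, e2, e3, e4, dwn_comm q p m]
      rw [show c * ((m.1 : ℕ → F) q) * ((m.1 : ℕ → F) p)
            = c * ((m.1 : ℕ → F) p) * ((m.1 : ℕ → F) q) from by ring,
        show c * ((m.1 : ℕ → F) q) * (((m.2 : ℕ → ℕ) p : F))
            = c * (((m.2 : ℕ → ℕ) p : F)) * ((m.1 : ℕ → F) q) from by ring,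
        show c * (((m.2 : ℕ → ℕ) q : F)) * ((m.1 : ℕ → F) p)
            = c * ((m.1 : ℕ → F) p) * (((m.2 : ℕ → ℕ) q : F)) from by ring,
        show c * (((m.2 : ℕ → ℕ) q : F)) * (((m.2 : ℕ → ℕ) p : F))
            = c * (((m.2 : ℕ → ℕ) p : F)) * (((m.2 : ℕ → ℕ) q : F)) from by ring]
      abel

lemma dval_add (m m' : (↥Γ × ↥(jIdx ℓ j0))) :
    dval F ℓ Γ j0 (m + m') = dval F ℓ Γ j0 m + dval F ℓ Γ j0 m' := by
  simp only [dval, madd_fst, madd_snd, Nat.cast_add, Finset.sum_add_distrib]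
  ring

lemma DopL_mul (u v : AddMonoidAlgebra F (↥Γ × ↥(jIdx ℓ j0))) :
    DopL F ℓ Γ j0 (u * v) = DopL F ℓ Γ j0 u * v + u * DopL F ℓ Γ j0 v := by
  induction u using AddMonoidAlgebra.induction_linear with
  | zero => simp
  | add f g hf hg => rw [add_mul, map_add, hf, hg, map_add, add_mul]; ring
  | single m c =>
    induction v using AddMonoidAlgebra.induction_linear with
    | zero => simp
    | add f g hf hg => rw [mul_add, map_add, hf, hg, map_add, mul_add]; ring
    | single m' c' =>
      rw [sgl_mul, DopL_single, DopL_single, DopL_single, sgl_mul, sgl_mul, dval_add,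
        show c * c' * (dval F ℓ Γ j0 m + dval F ℓ Γ j0 m')
          = c * dval F ℓ Γ j0 m * c' + c * (c' * dval F ℓ Γ j0 m') from by ring,
        AddMonoidAlgebra.single_add]

variable (F ℓ) in
def eps (p : ℕ) : F := if p ∈ iSet ℓ 6 6 ∪ barSet ℓ (iSet ℓ 4 6) then 1 else 0

lemma dval_dwn {p : ℕ} {m : (↥Γ × ↥(jIdx ℓ j0))} (h : (m.2 : ℕ → ℕ) p ≠ 0) :
    dval F ℓ Γ j0 (dwn ℓ Γ j0 p m) = dval F ℓ Γ j0 m - eps F ℓ p := by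
  simp only [dval, eps]
  have e3 : ((dwn ℓ Γ j0 p m).1 : ℕ → F) = (m.1 : ℕ → F) := rfl
  rw [e3]
  have step : ∀ q ∈ iSet ℓ 6 6 ∪ barSet ℓ (iSet ℓ 4 6),
      (((dwn ℓ Γ j0 p m).2 : ℕ → ℕ) q : F)
        = ((m.2 : ℕ → ℕ) q : F) - (if q = p then (1:F) else 0) := by
    intro q _
    rw [dwn_snd]
    rcases eq_or_ne q p with rfl | hq
    · rw [Pi.single_eq_same, if_pos rfl, Nat.cast_sub (by omega)]; norm_num
    · rw [Pi.single_eq_of_ne hq, if_neg hq, Nat.sub_zero, sub_zero]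
  rw [Finset.sum_congr rfl step, Finset.sum_sub_distrib, Finset.sum_ite_eq']
  ring

lemma DopL_ddL (hG2 : ∀ α ∈ Γ, ∀ p ∈ iSet ℓ 6 6 ∪ barSet ℓ (iSet ℓ 4 6), α p = 0)
    (p : ℕ) (u : AddMonoidAlgebra F (↥Γ × ↥(jIdx ℓ j0))) :
    DopL F ℓ Γ j0 (ddL F ℓ Γ j0 p u)
      = ddL F ℓ Γ j0 p (DopL F ℓ Γ j0 u) - eps F ℓ p • ddL F ℓ Γ j0 p u := by
  induction u using AddMonoidAlgebra.induction_linear with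
  | zero => simp
  | add f g hf hg => rw [map_add, map_add, hf, hg, map_add, map_add, smul_add]; abel
  | single m c =>
    have f1 : eps F ℓ p * (m.1 : ℕ → F) p = 0 := by
      by_cases hp : p ∈ iSet ℓ 6 6 ∪ barSet ℓ (iSet ℓ 4 6)
      · rw [hG2 m.1.1 m.1.2 p hp, mul_zero]
      · rw [eps, if_neg hp, zero_mul]
    have f2 : ((m.2 : ℕ → ℕ) p : F) * dval F ℓ Γ j0 (dwn ℓ Γ j0 p m)
        = ((m.2 : ℕ → ℕ) p : F) * (dval F ℓ Γ j0 m - eps F ℓ p) := by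
      rcases Nat.eq_zero_or_pos ((m.2 : ℕ → ℕ) p) with h0 | h0
      · rw [h0]; norm_num
      · rw [dval_dwn (by omega)]
    rw [ddL_single, map_add, DopL_single, DopL_single, DopL_single, ddL_single, smul_add,
      AddMonoidAlgebra.smul_single, AddMonoidAlgebra.smul_single, smul_eq_mul, smul_eq_mul,
      show c * ((m.1 : ℕ → F) p) * dval F ℓ Γ j0 m
        = c * dval F ℓ Γ j0 m * ((m.1 : ℕ → F) p) - eps F ℓ p * (c * ((m.1 : ℕ → F) p)) from by
          linear_combination c * f1,
      show c * (((m.2 : ℕ → ℕ) p : F)) * dval F ℓ Γ j0 (dwn ℓ Γ j0 p m)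
        = c * dval F ℓ Γ j0 m * (((m.2 : ℕ → ℕ) p : F))
          - eps F ℓ p * (c * (((m.2 : ℕ → ℕ) p : F))) from by linear_combination c * f2,
      AddMonoidAlgebra.single_sub, AddMonoidAlgebra.single_sub]
    module

lemma iot_zero : iot ℓ 0 = 0 := by
  rw [iot, Finset.Icc_eq_empty (by omega), Finset.sum_empty]

lemma iot_mono {i j : ℕ} (h : i ≤ j) : iot ℓ i ≤ iot ℓ j :=
  Finset.sum_le_sum_of_subset (Finset.Icc_subset_Icc_right h)

lemma mem_iSet13 {p : ℕ} : p ∈ iSet ℓ 1 3 ↔ 1 ≤ p ∧ p ≤ iot ℓ 3 := by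
  rw [iSet, Finset.mem_Icc]; norm_num [iot_zero]
lemma mem_iSet45 {p : ℕ} : p ∈ iSet ℓ 4 5 ↔ iot ℓ 3 + 1 ≤ p ∧ p ≤ iot ℓ 5 := by
  rw [iSet, Finset.mem_Icc]
lemma mem_iSet66 {p : ℕ} : p ∈ iSet ℓ 6 6 ↔ iot ℓ 5 + 1 ≤ p ∧ p ≤ iot ℓ 6 := by
  rw [iSet, Finset.mem_Icc]
lemma mem_iSet46 {p : ℕ} : p ∈ iSet ℓ 4 6 ↔ iot ℓ 3 + 1 ≤ p ∧ p ≤ iot ℓ 6 := by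
  rw [iSet, Finset.mem_Icc]
lemma mem_iSet16 {p : ℕ} : p ∈ iSet ℓ 1 6 ↔ 1 ≤ p ∧ p ≤ iot ℓ 6 := by
  rw [iSet, Finset.mem_Icc]; norm_num [iot_zero]
lemma mem_iSet12 {p : ℕ} : p ∈ iSet ℓ 1 2 ↔ 1 ≤ p ∧ p ≤ iot ℓ 2 := by
  rw [iSet, Finset.mem_Icc]; norm_num [iot_zero]
lemma mem_iSet44 {p : ℕ} : p ∈ iSet ℓ 4 4 ↔ iot ℓ 3 + 1 ≤ p ∧ p ≤ iot ℓ 4 := by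
  rw [iSet, Finset.mem_Icc]
lemma mem_iSet11 {p : ℕ} : p ∈ iSet ℓ 1 1 ↔ 1 ≤ p ∧ p ≤ iot ℓ 1 := by
  rw [iSet, Finset.mem_Icc]; norm_num [iot_zero]

lemma tri {p : ℕ} (hp1 : 1 ≤ p) (hp6 : p ≤ iot ℓ 6) :
    p ∈ iSet ℓ 1 3 ∨ p ∈ iSet ℓ 4 5 ∨ p ∈ iSet ℓ 6 6 := by
  rw [mem_iSet13, mem_iSet45, mem_iSet66]
  have h35 := iot_mono (ℓ := ℓ) (show 3 ≤ 5 by omega)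
  omega

lemma eps_lo {p : ℕ} (hp1 : 1 ≤ p) (hp6 : p ≤ iot ℓ 6) :
    eps F ℓ p = if p ∈ iSet ℓ 6 6 then 1 else 0 := by
  rw [eps]
  have hno : p ∉ barSet ℓ (iSet ℓ 4 6) := by
    rw [barSet, Finset.mem_image]
    rintro ⟨r, hr, hb⟩
    rw [mem_iSet46] at hr
    rw [bar, if_pos hr.2] at hb
    omega
  simp [Finset.mem_union, hno]

lemma eps_hi {p : ℕ} (hp1 : 1 ≤ p) (hp6 : p ≤ iot ℓ 6) :
    eps F ℓ (p + iot ℓ 6) = if p ∈ iSet ℓ 4 6 then 1 else 0 := by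
  rw [eps]
  have h1 : p + iot ℓ 6 ∉ iSet ℓ 6 6 := by rw [mem_iSet66]; omega
  have h2 : p + iot ℓ 6 ∈ barSet ℓ (iSet ℓ 4 6) ↔ p ∈ iSet ℓ 4 6 := by
    rw [barSet, Finset.mem_image]
    constructor
    · rintro ⟨r, hr, hb⟩
      have hr2 := mem_iSet46.mp hr
      rw [bar, if_pos hr2.2] at hb
      have : r = p := by omega
      subst this; exact hr
    · intro hp
      have hp2 := mem_iSet46.mp hp
      exact ⟨p, hp, by rw [bar, if_pos hp2.2]⟩
  simp [Finset.mem_union, h1, h2]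

lemma mem_jIdx_single {p : ℕ} (hp : p ∈ iSet ℓ 6 6 ∪ barSet ℓ (iSet ℓ 4 6)) :
    (Pi.single p 1 : ℕ → ℕ) ∈ jIdx ℓ j0 := by
  have h16 := iot_mono (ℓ := ℓ) (show 1 ≤ 6 by omega)
  have h13 := iot_mono (ℓ := ℓ) (show 1 ≤ 3 by omega)
  have h25 := iot_mono (ℓ := ℓ) (show 2 ≤ 5 by omega)
  have h45 := iot_mono (ℓ := ℓ) (show 4 ≤ 5 by omega)
  have h56 := iot_mono (ℓ := ℓ) (show 5 ≤ 6 by omega)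
  have hb : (iot ℓ 5 + 1 ≤ p ∧ p ≤ iot ℓ 6)
      ∨ (iot ℓ 3 + iot ℓ 6 + 1 ≤ p ∧ p ≤ iot ℓ 6 + iot ℓ 6) := by
    rcases Finset.mem_union.mp hp with h | h
    · left; rwa [mem_iSet66] at h
    · right
      rw [barSet, Finset.mem_image] at h
      obtain ⟨r, hr, hbb⟩ := h
      rw [mem_iSet46] at hr
      rw [bar, if_pos hr.2] at hbb
      omega
  constructor
  · intro _
    exact Pi.single_eq_of_ne (show (0:ℕ) ≠ p by omega) 1
  · intro q hq1 hq2
    rcases eq_or_ne q p with rfl | hqp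
    · exfalso
      rcases hq2 with h | h
      · rcases Finset.mem_union.mp h with h' | h'
        · rcases Finset.mem_union.mp h' with h'' | h''
          · rw [mem_iSet12] at h''; omega
          · rw [mem_iSet44] at h''; omega
        · rw [barSet, Finset.mem_image] at h'
          obtain ⟨r, hr, hbb⟩ := h'
          rw [mem_iSet11] at hr
          rw [bar, if_pos (le_trans hr.2 h16)] at hbb
          omega
      · omega
    · exact Pi.single_eq_of_ne hqp 1

lemma sum_single_mem (s : Finset ℕ) (p : ℕ) :
    (∑ q ∈ s, (Pi.single p (1:F) : ℕ → F) q) = if p ∈ s then 1 else 0 := by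
  simp only [Pi.single_apply]
  exact Finset.sum_ite_eq' s p (fun _ => 1)

lemma sgm_eq {p : ℕ} (hp : p ≤ iot ℓ 6) : sgm F ℓ p =
    if p ∈ iSet ℓ 1 3 then -Pi.single p 1 - Pi.single (p + iot ℓ 6) (1:F)
    else if p ∈ iSet ℓ 4 5 then -Pi.single p (1:F) else 0 := by
  rw [sgm]
  simp only [if_pos hp]

lemma sgm_mem (hG1 : ∀ p ∈ jSet ℓ 1 3 ∪ iSet ℓ 4 5, (Pi.single p (1:F) : ℕ → F) ∈ Γ)
    {p : ℕ} (hp1 : 1 ≤ p) (hp6 : p ≤ iot ℓ 6) : sgm F ℓ p ∈ Γ := by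
  rw [sgm_eq hp6]
  split_ifs with h1 h2
  · refine sub_mem (neg_mem (hG1 p ?_)) (hG1 (p + iot ℓ 6) ?_)
    · exact Finset.mem_union_left _ (Finset.mem_union_left _ h1)
    · refine Finset.mem_union_left _ (Finset.mem_union_right _ ?_)
      rw [barSet, Finset.mem_image]
      exact ⟨p, h1, by rw [bar, if_pos hp6]⟩
  · exact neg_mem (hG1 p (Finset.mem_union_right _ h2))
  · exact zero_mem Γ

lemma eps13 {p : ℕ} (h1 : p ∈ iSet ℓ 1 3) : eps F ℓ p = 0 ∧ eps F ℓ (p + iot ℓ 6) = 0 := by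
  have hb := mem_iSet13.mp h1
  have h35 := iot_mono (ℓ := ℓ) (show 3 ≤ 5 by omega)
  have h36 := iot_mono (ℓ := ℓ) (show 3 ≤ 6 by omega)
  constructor
  · rw [eps_lo hb.1 (le_trans hb.2 h36), if_neg (by rw [mem_iSet66]; omega)]
  · rw [eps_hi hb.1 (le_trans hb.2 h36), if_neg (by rw [mem_iSet46]; omega)]

lemma eps45 {p : ℕ} (h2 : p ∈ iSet ℓ 4 5) : eps F ℓ p = 0 ∧ eps F ℓ (p + iot ℓ 6) = 1 := by
  have hb := mem_iSet45.mp h2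
  have h56 := iot_mono (ℓ := ℓ) (show 5 ≤ 6 by omega)
  have h03 : 1 ≤ p := by omega
  constructor
  · rw [eps_lo h03 (le_trans hb.2 h56), if_neg (by rw [mem_iSet66]; omega)]
  · rw [eps_hi h03 (le_trans hb.2 h56), if_pos (by rw [mem_iSet46]; omega)]

lemma eps66 {p : ℕ} (h3 : p ∈ iSet ℓ 6 6) : eps F ℓ p = 1 ∧ eps F ℓ (p + iot ℓ 6) = 1 := by
  have hb := mem_iSet66.mp h3
  have h35 := iot_mono (ℓ := ℓ) (show 3 ≤ 5 by omega)
  have h03 : 1 ≤ p := by omega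
  constructor
  · rw [eps_lo h03 hb.2, if_pos h3]
  · rw [eps_hi h03 hb.2, if_pos (by rw [mem_iSet46]; omega)]

lemma sgm_apply_lo {p q : ℕ} (hp1 : 1 ≤ p) (hp6 : p ≤ iot ℓ 6)
    (hq1 : 1 ≤ q) (hq6 : q ≤ iot ℓ 6) :
    sgm F ℓ p q = if q = p then eps F ℓ p - 1 else 0 := by
  rw [sgm_eq hp6]
  rcases tri hp1 hp6 with h1 | h2 | h3
  · have hb := mem_iSet13.mp h1
    rw [if_pos h1, (eps13 h1).1]
    simp only [Pi.sub_apply, Pi.neg_apply]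
    rw [Pi.single_eq_of_ne (show q ≠ p + iot ℓ 6 by omega)]
    rcases eq_or_ne q p with rfl | hqp
    · rw [Pi.single_eq_same, if_pos rfl]; ring
    · rw [Pi.single_eq_of_ne hqp, if_neg hqp]; ring
  · have hb := mem_iSet45.mp h2
    rw [if_neg (by rw [mem_iSet13]; omega), if_pos h2, (eps45 h2).1]
    simp only [Pi.neg_apply]
    rcases eq_or_ne q p with rfl | hqp
    · rw [Pi.single_eq_same, if_pos rfl]; ring
    · rw [Pi.single_eq_of_ne hqp, if_neg hqp]; ring
  · have hb := mem_iSet66.mp h3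
    have h35 := iot_mono (ℓ := ℓ) (show 3 ≤ 5 by omega)
    rw [if_neg (by rw [mem_iSet13]; omega), if_neg (by rw [mem_iSet45]; omega), (eps66 h3).1]
    rcases eq_or_ne q p with rfl | hqp
    · rw [if_pos rfl]; norm_num
    · rw [if_neg hqp]; rfl

lemma sgm_apply_hi {p q : ℕ} (hp1 : 1 ≤ p) (hp6 : p ≤ iot ℓ 6)
    (hq1 : 1 ≤ q) (hq6 : q ≤ iot ℓ 6) :
    sgm F ℓ p (q + iot ℓ 6) = if q = p then eps F ℓ (p + iot ℓ 6) - 1 else 0 := by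
  rw [sgm_eq hp6]
  rcases tri hp1 hp6 with h1 | h2 | h3
  · have hb := mem_iSet13.mp h1
    rw [if_pos h1, (eps13 h1).2]
    simp only [Pi.sub_apply, Pi.neg_apply]
    rw [Pi.single_eq_of_ne (show q + iot ℓ 6 ≠ p by omega)]
    rcases eq_or_ne q p with rfl | hqp
    · rw [Pi.single_eq_same, if_pos rfl]; ring
    · rw [Pi.single_eq_of_ne (show q + iot ℓ 6 ≠ p + iot ℓ 6 by omega), if_neg hqp]; ring
  · have hb := mem_iSet45.mp h2
    rw [if_neg (by rw [mem_iSet13]; omega), if_pos h2, (eps45 h2).2]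
    simp only [Pi.neg_apply]
    rw [Pi.single_eq_of_ne (show q + iot ℓ 6 ≠ p by omega)]
    rcases eq_or_ne q p with rfl | hqp
    · rw [if_pos rfl]; norm_num
    · rw [if_neg hqp]; norm_num
  · have hb := mem_iSet66.mp h3
    have h35 := iot_mono (ℓ := ℓ) (show 3 ≤ 5 by omega)
    rw [if_neg (by rw [mem_iSet13]; omega), if_neg (by rw [mem_iSet45]; omega), (eps66 h3).2]
    rcases eq_or_ne q p with rfl | hqp
    · rw [if_pos rfl]; norm_num
    · rw [if_neg hqp]; rfl

lemma sgm_apply_zero {p : ℕ} (hp1 : 1 ≤ p) (hp6 : p ≤ iot ℓ 6) : sgm F ℓ p 0 = 0 := by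
  rw [sgm_eq hp6]
  split_ifs with h1 h2
  · simp only [Pi.sub_apply, Pi.neg_apply]
    rw [Pi.single_eq_of_ne (show (0:ℕ) ≠ p by omega),
      Pi.single_eq_of_ne (show (0:ℕ) ≠ p + iot ℓ 6 by omega)]
    ring
  · simp only [Pi.neg_apply]
    rw [Pi.single_eq_of_ne (show (0:ℕ) ≠ p by omega)]
    ring
  · rfl

lemma sgm_dval {p : ℕ} (hp1 : 1 ≤ p) (hp6 : p ≤ iot ℓ 6) :
    (∑ q ∈ jSet ℓ 1 3 ∪ iSet ℓ 4 5, sgm F ℓ p q)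
      = eps F ℓ p + eps F ℓ (p + iot ℓ 6) - 2 := by
  rw [sgm_eq hp6]
  rcases tri hp1 hp6 with h1 | h2 | h3
  · rw [if_pos h1, (eps13 h1).1, (eps13 h1).2]
    simp only [Pi.sub_apply, Pi.neg_apply]
    rw [Finset.sum_sub_distrib, Finset.sum_neg_distrib, sum_single_mem, sum_single_mem]
    have m1 : p ∈ jSet ℓ 1 3 ∪ iSet ℓ 4 5 :=
      Finset.mem_union_left _ (Finset.mem_union_left _ h1)
    have m2 : p + iot ℓ 6 ∈ jSet ℓ 1 3 ∪ iSet ℓ 4 5 := by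
      refine Finset.mem_union_left _ (Finset.mem_union_right _ ?_)
      rw [barSet, Finset.mem_image]
      exact ⟨p, h1, by rw [bar, if_pos hp6]⟩
    rw [if_pos m1, if_pos m2]
    ring
  · rw [if_neg (by rw [mem_iSet13]; have hb := mem_iSet45.mp h2; omega), if_pos h2,
      (eps45 h2).1, (eps45 h2).2]
    simp only [Pi.neg_apply]
    rw [Finset.sum_neg_distrib, sum_single_mem, if_pos (Finset.mem_union_right _ h2)]
    ring
  · have hb := mem_iSet66.mp h3
    have h35 := iot_mono (ℓ := ℓ) (show 3 ≤ 5 by omega)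
    rw [if_neg (by rw [mem_iSet13]; omega), if_neg (by rw [mem_iSet45]; omega),
      (eps66 h3).1, (eps66 h3).2]
    simp
    norm_num

lemma X_eq {α : ℕ → F} {i : ℕ → ℕ} (hα : α ∈ Γ) (hi : i ∈ jIdx ℓ j0) :
    X F ℓ Γ j0 α i = Finsupp.single (⟨α, hα⟩, ⟨i, hi⟩) 1 := by
  rw [X, dif_pos ⟨hα, hi⟩]

lemma mulA_eq (u v : CA F ℓ Γ j0) :
    AddMonoidAlgebra.ofCoeff (mulA F ℓ Γ j0 u v)
      = (AddMonoidAlgebra.ofCoeff u : AddMonoidAlgebra F (↥Γ × ↥(jIdx ℓ j0)))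
        * AddMonoidAlgebra.ofCoeff v := by
  rw [AddMonoidAlgebra.mul_def, mulA, AddMonoidAlgebra.ofCoeff_finsuppSum]
  refine Finsupp.sum_congr fun a _ => ?_
  rw [AddMonoidAlgebra.ofCoeff_finsuppSum]
  refine Finsupp.sum_congr fun b _ => ?_
  rw [X_eq (add_mem a.1.2 b.1.2) (mem_jIdx_add a.2.2 b.2.2), Finsupp.smul_single,
    smul_eq_mul, mul_one]
  rfl

lemma ddL_sum_form (p : ℕ) (u : CA F ℓ Γ j0) :
    ddL F ℓ Γ j0 p (AddMonoidAlgebra.ofCoeff u) = u.sum fun m c =>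
      AddMonoidAlgebra.single m (c * (m.1 : ℕ → F) p)
        + AddMonoidAlgebra.single (dwn ℓ Γ j0 p m) (c * ((m.2 : ℕ → ℕ) p : F)) := by
  rw [ddL]
  refine Eq.trans (Finsupp.lsum_apply F _ u) (Finsupp.sum_congr fun m _ => ?_)
  rw [LinearMap.toSpanSingleton_apply, smul_add, AddMonoidAlgebra.smul_single, AddMonoidAlgebra.smul_single,
    smul_eq_mul, smul_eq_mul]

lemma dd_eq (p : ℕ) (u : CA F ℓ Γ j0) :
    AddMonoidAlgebra.ofCoeff (dd F ℓ Γ j0 p u) = ddL F ℓ Γ j0 p (AddMonoidAlgebra.ofCoeff u) := by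
  rw [ddL_sum_form, dd, pstar, pt, ← Finsupp.sum_add, AddMonoidAlgebra.ofCoeff_finsuppSum]
  refine Finsupp.sum_congr fun a _ => ?_
  rw [Finsupp.smul_single', mul_one, X_eq a.1.2 (mem_jIdx_sub a.2.2 p), Finsupp.smul_single',
    mul_one]
  rfl

lemma pstar_add (p : ℕ) (f g : CA F ℓ Γ j0) :
    pstar F ℓ Γ j0 p (f + g) = pstar F ℓ Γ j0 p f + pstar F ℓ Γ j0 p g := by
  rw [pstar, pstar, pstar]
  exact Finsupp.sum_add_index' (fun a => by rw [zero_mul, zero_smul])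
    (fun a b₁ b₂ => by rw [add_mul, add_smul])

lemma pt_add (p : ℕ) (f g : CA F ℓ Γ j0) :
    pt F ℓ Γ j0 p (f + g) = pt F ℓ Γ j0 p f + pt F ℓ Γ j0 p g := by
  rw [pt, pt, pt]
  exact Finsupp.sum_add_index' (fun a => by rw [zero_mul, zero_smul])
    (fun a b₁ b₂ => by rw [add_mul, add_smul])

lemma pstar_zero (p : ℕ) : pstar F ℓ Γ j0 p 0 = 0 := by
  rw [pstar]; exact Finsupp.sum_zero_index

lemma pt_zero (p : ℕ) : pt F ℓ Γ j0 p 0 = 0 := by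
  rw [pt]; exact Finsupp.sum_zero_index

lemma single_sum (s : Finset ℕ) (m : ↥Γ × ↥(jIdx ℓ j0)) (f : ℕ → F) :
    (∑ p ∈ s, Finsupp.single (M := F) m (f p)) = Finsupp.single m (∑ p ∈ s, f p) :=
  (map_sum (Finsupp.singleAddHom m) f s).symm

lemma Dop_eq (u : CA F ℓ Γ j0) :
    AddMonoidAlgebra.ofCoeff (Dop F ℓ Γ j0 u) = DopL F ℓ Γ j0 (AddMonoidAlgebra.ofCoeff u) := by
  induction u using Finsupp.induction_linear with
  | zero =>
    rw [AddMonoidAlgebra.ofCoeff_zero, map_zero, Dop]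
    have e1 : ∀ p ∈ jSet ℓ 1 3 ∪ iSet ℓ 4 5,
        pstar F ℓ Γ j0 p (0 : CA F ℓ Γ j0) = 0 :=
      fun p _ => pstar_zero p
    have e2 : ∀ p ∈ iSet ℓ 6 6 ∪ barSet ℓ (iSet ℓ 4 6),
        mulA F ℓ Γ j0 (X F ℓ Γ j0 0 (Pi.single p 1))
          (pt F ℓ Γ j0 p (0 : CA F ℓ Γ j0)) = 0 :=
      fun p _ => by rw [pt_zero, mulA]; simp
    rw [Finset.sum_congr rfl e1, Finset.sum_congr rfl e2, Finset.sum_const_zero,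
      Finset.sum_const_zero, add_zero, AddMonoidAlgebra.ofCoeff_zero]
  | add f g hf hg =>
    rw [AddMonoidAlgebra.ofCoeff_add, map_add, ← hf, ← hg, ← AddMonoidAlgebra.ofCoeff_add]
    congr 1
    rw [Dop, Dop, Dop]
    have e1 : ∀ p ∈ jSet ℓ 1 3 ∪ iSet ℓ 4 5,
        pstar F ℓ Γ j0 p (f + g) = pstar F ℓ Γ j0 p f + pstar F ℓ Γ j0 p g :=
      fun p _ => pstar_add p f g
    have e2 : ∀ p ∈ iSet ℓ 6 6 ∪ barSet ℓ (iSet ℓ 4 6),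
        mulA F ℓ Γ j0 (X F ℓ Γ j0 0 (Pi.single p 1)) (pt F ℓ Γ j0 p (f + g))
          = mulA F ℓ Γ j0 (X F ℓ Γ j0 0 (Pi.single p 1)) (pt F ℓ Γ j0 p f)
            + mulA F ℓ Γ j0 (X F ℓ Γ j0 0 (Pi.single p 1)) (pt F ℓ Γ j0 p g) :=
      fun p _ => by
        rw [pt_add]
        exact AddMonoidAlgebra.ofCoeff_injective (by
          rw [AddMonoidAlgebra.ofCoeff_add, mulA_eq, mulA_eq, mulA_eq, AddMonoidAlgebra.ofCoeff_add,
            mul_add])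
    rw [Finset.sum_congr rfl e1, Finset.sum_congr rfl e2, Finset.sum_add_distrib,
      Finset.sum_add_distrib]
    abel
  | single m c =>
    rw [AddMonoidAlgebra.ofCoeff_single, DopL_single, Dop]
    have h1 : ∀ p, pstar F ℓ Γ j0 p (Finsupp.single m c)
        = Finsupp.single m (c * (m.1 : ℕ → F) p) := fun p => by
      rw [pstar, Finsupp.sum_single_index (by rw [zero_mul, zero_smul]),
        Finsupp.smul_single', mul_one]
    have h2 : ∀ p ∈ iSet ℓ 6 6 ∪ barSet ℓ (iSet ℓ 4 6),
        mulA F ℓ Γ j0 (X F ℓ Γ j0 0 (Pi.single p 1)) (pt F ℓ Γ j0 p (Finsupp.single m c))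
          = Finsupp.single m (c * ((m.2 : ℕ → ℕ) p : F)) := by
      intro p hp
      rw [pt, Finsupp.sum_single_index (by rw [zero_mul, zero_smul]),
        X_eq m.1.2 (mem_jIdx_sub m.2.2 p), Finsupp.smul_single', mul_one,
        X_eq (zero_mem Γ) (mem_jIdx_single hp)]
      apply AddMonoidAlgebra.ofCoeff_injective
      rw [mulA_eq, AddMonoidAlgebra.ofCoeff_single, AddMonoidAlgebra.ofCoeff_single,
        AddMonoidAlgebra.ofCoeff_single, sgl_mul, one_mul]
      rcases Nat.eq_zero_or_pos ((m.2 : ℕ → ℕ) p) with h0 | h0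
      · rw [h0]; norm_num
      · have hexp : ((⟨(0:ℕ→F), zero_mem Γ⟩, ⟨Pi.single p 1, mem_jIdx_single hp⟩)
              : ↥Γ × ↥(jIdx ℓ j0))
            + (⟨m.1, m.1.2⟩, ⟨(m.2 : ℕ → ℕ) - Pi.single p 1, mem_jIdx_sub m.2.2 p⟩) = m := by
          refine meq _ _ (Subtype.ext ?_) fun q => ?_
          · exact zero_add _
          · show (Pi.single p 1 : ℕ → ℕ) q + ((m.2 : ℕ → ℕ) q - (Pi.single p 1 : ℕ → ℕ) q)
              = (m.2 : ℕ → ℕ) q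
            rcases eq_or_ne q p with rfl | hq
            · rw [Pi.single_eq_same]; omega
            · rw [Pi.single_eq_of_ne hq]; omega
        rw [hexp]
    rw [Finset.sum_congr rfl (fun p _ => h1 p), Finset.sum_congr rfl h2, single_sum, single_sum,
      ← Finsupp.single_add, AddMonoidAlgebra.ofCoeff_single]
    congr 1
    rw [dval, mul_add, Finset.mul_sum, Finset.mul_sum]

lemma ddL_wt (q : ℕ) (α : ℕ → F) (hα : α ∈ Γ) :
    ddL F ℓ Γ j0 q (AddMonoidAlgebra.single (⟨α, hα⟩, ⟨0, mem_jIdx_zero⟩) 1)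
      = AddMonoidAlgebra.single (⟨α, hα⟩, ⟨0, mem_jIdx_zero⟩) (α q) := by
  rw [ddL_single, one_mul, one_mul]
  simp

lemma DopL_wt (α : ℕ → F) (hα : α ∈ Γ) :
    DopL F ℓ Γ j0 (AddMonoidAlgebra.single (⟨α, hα⟩, ⟨0, mem_jIdx_zero⟩) 1)
      = AddMonoidAlgebra.single (⟨α, hα⟩, ⟨0, mem_jIdx_zero⟩)
          (∑ q ∈ jSet ℓ 1 3 ∪ iSet ℓ 4 5, α q) := by
  rw [DopL_single, one_mul, dval]
  congr 1
  simp

lemma eps_zero : eps F ℓ 0 = 0 := by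
  rw [eps, if_neg]
  intro h
  rcases Finset.mem_union.mp h with h' | h'
  · rw [mem_iSet66] at h'; omega
  · rw [barSet, Finset.mem_image] at h'
    obtain ⟨r, hr, hb⟩ := h'
    rw [mem_iSet46] at hr
    rw [bar, if_pos hr.2] at hb
    omega

variable (F ℓ Γ j0) in
def theC (hG1 : ∀ p ∈ jSet ℓ 1 3 ∪ iSet ℓ 4 5, (Pi.single p (1 : F) : ℕ → F) ∈ Γ)
    (hG2 : ∀ α ∈ Γ, ∀ p ∈ iSet ℓ 6 6 ∪ barSet ℓ (iSet ℓ 4 6), α p = 0) :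
    ContactAux.CSys F (AddMonoidAlgebra F (↥Γ × ↥(jIdx ℓ j0))) where
  S := iSet ℓ 1 6
  a p := ddL F ℓ Γ j0 p
  b p := ddL F ℓ Γ j0 (bar ℓ p)
  d0 := ddL F ℓ Γ j0 0
  del := DopL F ℓ Γ j0
  w p := AddMonoidAlgebra.ofCoeff (X F ℓ Γ j0 (sgm F ℓ p) 0)
  e p := eps F ℓ p
  e' p := eps F ℓ (bar ℓ p)
  hda p _ u v := ddL_mul p u v
  hdb p _ u v := ddL_mul (bar ℓ p) u v
  hd0 u v := ddL_mul 0 u v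
  hdd u v := DopL_mul u v
  haa p _ q _ u := ddL_comm p q u
  hab p _ q _ u := ddL_comm p (bar ℓ q) u
  hbb p _ q _ u := ddL_comm (bar ℓ p) (bar ℓ q) u
  ha0 p _ u := ddL_comm p 0 u
  hb0 p _ u := ddL_comm (bar ℓ p) 0 u
  hadel p _ u := by rw [DopL_ddL hG2 p u]; abel
  hbdel p _ u := by rw [DopL_ddL hG2 (bar ℓ p) u]; abel
  h0del u := by
    have h := DopL_ddL hG2 0 u
    rw [eps_zero, zero_smul, sub_zero] at h
    exact h.symm
  hwa p hp q hq := by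
    have hp' := mem_iSet16.mp hp
    have hq' := mem_iSet16.mp hq
    rw [X_eq (sgm_mem hG1 hp'.1 hp'.2) mem_jIdx_zero, AddMonoidAlgebra.ofCoeff_single, ddL_wt,
      sgm_apply_lo hp'.1 hp'.2 hq'.1 hq'.2, AddMonoidAlgebra.smul_single', mul_one]
  hwb p hp q hq := by
    have hp' := mem_iSet16.mp hp
    have hq' := mem_iSet16.mp hq
    rw [X_eq (sgm_mem hG1 hp'.1 hp'.2) mem_jIdx_zero, AddMonoidAlgebra.ofCoeff_single,
      show bar ℓ q = q + iot ℓ 6 from by rw [bar, if_pos hq'.2],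
      ddL_wt, sgm_apply_hi hp'.1 hp'.2 hq'.1 hq'.2,
      show bar ℓ p = p + iot ℓ 6 from by rw [bar, if_pos hp'.2],
      AddMonoidAlgebra.smul_single', mul_one]
  hw0 p hp := by
    have hp' := mem_iSet16.mp hp
    rw [X_eq (sgm_mem hG1 hp'.1 hp'.2) mem_jIdx_zero, AddMonoidAlgebra.ofCoeff_single, ddL_wt,
      sgm_apply_zero hp'.1 hp'.2, AddMonoidAlgebra.single_zero]
  hwdel p hp := by
    have hp' := mem_iSet16.mp hp
    rw [X_eq (sgm_mem hG1 hp'.1 hp'.2) mem_jIdx_zero, AddMonoidAlgebra.ofCoeff_single, DopL_wt, sgm_dval hp'.1 hp'.2,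
      show bar ℓ p = p + iot ℓ 6 from by rw [bar, if_pos hp'.2],
      AddMonoidAlgebra.smul_single', mul_one]

section
variable (hG1 : ∀ p ∈ jSet ℓ 1 3 ∪ iSet ℓ 4 5, (Pi.single p (1 : F) : ℕ → F) ∈ Γ)
variable (hG2 : ∀ α ∈ Γ, ∀ p ∈ iSet ℓ 6 6 ∪ barSet ℓ (iSet ℓ 4 6), α p = 0)

lemma theC_S : (theC F ℓ Γ j0 hG1 hG2).S = iSet ℓ 1 6 := rfl
lemma theC_a : (theC F ℓ Γ j0 hG1 hG2).a = fun p => ddL F ℓ Γ j0 p := rfl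
lemma theC_b : (theC F ℓ Γ j0 hG1 hG2).b = fun p => ddL F ℓ Γ j0 (bar ℓ p) := rfl
lemma theC_d0 : (theC F ℓ Γ j0 hG1 hG2).d0 = ddL F ℓ Γ j0 0 := rfl
lemma theC_del : (theC F ℓ Γ j0 hG1 hG2).del = DopL F ℓ Γ j0 := rfl
lemma theC_w : (theC F ℓ Γ j0 hG1 hG2).w = fun p => AddMonoidAlgebra.ofCoeff (X F ℓ Γ j0 (sgm F ℓ p) 0) := rfl

lemma brk_eq (u v : CA F ℓ Γ j0) :
    AddMonoidAlgebra.ofCoeff (brk F ℓ Γ j0 u v)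
      = (theC F ℓ Γ j0 hG1 hG2).BB (AddMonoidAlgebra.ofCoeff u) (AddMonoidAlgebra.ofCoeff v) := by
  simp only [ContactAux.CSys.BB, ContactAux.CSys.PP, ContactAux.CSys.QQ, ContactAux.CSys.TT,
    theC_S, theC_a, theC_b, theC_d0, theC_del, theC_w, brk]
  simp only [AddMonoidAlgebra.ofCoeff_add, AddMonoidAlgebra.ofCoeff_sub, AddMonoidAlgebra.ofCoeff_sum,
    AddMonoidAlgebra.ofCoeff_smul, mulA_eq, dd_eq, Dop_eq]
  rw [add_sub_assoc]

end

end ContactConcrete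

/-- The contact bracket (2.18) on `𝒜` is skew-symmetric and satisfies the
Jacobi identity; hence `(𝒜, [·,·])` is a Lie algebra: the contact Lie algebra
`𝒦 = 𝒦(ℓ⃗,σ,Γ,𝒥)` in normalized form. -/
theorem contact_bracket_skewSymm_and_jacobi
    {F : Type*} [Field F] [CharZero F] (ℓ : ℕ → ℕ) (Γ : AddSubgroup (ℕ → F)) (j0 : Bool)
    (hℓ : 0 < iot ℓ 6)
    (hΓ1 : ∀ p ∈ jSet ℓ 1 3 ∪ iSet ℓ 4 5, (Pi.single p (1 : F) : ℕ → F) ∈ Γ)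
    (hΓ2 : ∀ α ∈ Γ, ∀ p ∈ iSet ℓ 6 6 ∪ barSet ℓ (iSet ℓ 4 6), α p = 0)
    (hΓ3 : ∀ α ∈ Γ, ∀ p, 2 * iot ℓ 6 < p → α p = 0)
    (hΓ0 : (∃ α ∈ Γ, α 0 ≠ 0) → (Pi.single 0 (1 : F) : ℕ → F) ∈ Γ)
    (hJ0 : j0 = false → ∃ α ∈ Γ, α 0 ≠ 0) :
    (∀ u v : CA F ℓ Γ j0, brk F ℓ Γ j0 u v = -brk F ℓ Γ j0 v u) ∧
    (∀ u v w : CA F ℓ Γ j0,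
      brk F ℓ Γ j0 (brk F ℓ Γ j0 u v) w + brk F ℓ Γ j0 (brk F ℓ Γ j0 v w) u +
        brk F ℓ Γ j0 (brk F ℓ Γ j0 w u) v = 0) := by
  classical
  have hbrk := ContactConcrete.brk_eq (F := F) (ℓ := ℓ) (Γ := Γ) (j0 := j0) hΓ1 hΓ2
  refine ⟨fun u v => ?_, fun u v w => ?_⟩
  · apply AddMonoidAlgebra.ofCoeff_injective
    rw [AddMonoidAlgebra.ofCoeff_neg, hbrk u v, hbrk v u]
    exact (ContactConcrete.theC F ℓ Γ j0 hΓ1 hΓ2).skew _ _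
  · apply AddMonoidAlgebra.ofCoeff_injective
    simp only [AddMonoidAlgebra.ofCoeff_add, AddMonoidAlgebra.ofCoeff_zero, hbrk]
    exact (ContactConcrete.theC F ℓ Γ j0 hΓ1 hΓ2).jacobi _ _ _

end
end

section
/- For every additive group homomorphism μ:Γ→F with μ(σ_p)=0 for all p∈I_{1,5}, the linear map d_μ:𝒦→𝒦 defined on the basis by d_μ(x^{α,i⃗})=μ(α)x^{α,i⃗} is a derivation of the Lie algebra 𝒦. -/
noncomputable section

variable (F : Type*) [Field F] (ℓ : ℕ → ℕ) (Γ : AddSubgroup (ℕ → F)) (j0 : Bool)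

/-- For a function `μ : Γ → F`, the diagonal linear map `d_μ : x^{α,i⃗} ↦ μ(α)x^{α,i⃗}`. -/
def dmu (μ : ↥Γ → F) (u : CA F ℓ Γ j0) : CA F ℓ Γ j0 :=
  u.sum fun a ca => (ca * μ a.1) • Finsupp.single a 1

section DerivAux

variable {F ℓ Γ j0}

/-- `dmu` as a bundled linear map. -/
def dmuL (μ0 : ↥Γ → F) : CA F ℓ Γ j0 →ₗ[F] CA F ℓ Γ j0 :=
  Finsupp.lsum F fun a => LinearMap.toSpanSingleton F _ (μ0 a.1 • Finsupp.single a 1)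

lemma dmu_eq (μ0 : ↥Γ → F) (u : CA F ℓ Γ j0) :
    dmu F ℓ Γ j0 μ0 u = dmuL μ0 u := by
  rw [dmu, dmuL, Finsupp.lsum_apply]
  exact Finsupp.sum_congr fun a _ => by
    rw [LinearMap.toSpanSingleton_apply, smul_smul]

/-- `pstar` as a bundled linear map. -/
def pstarL (p : ℕ) : CA F ℓ Γ j0 →ₗ[F] CA F ℓ Γ j0 :=
  Finsupp.lsum F fun a => LinearMap.toSpanSingleton F _ (a.1.1 p • Finsupp.single a 1)

lemma pstar_eq (p : ℕ) (u : CA F ℓ Γ j0) :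
    pstar F ℓ Γ j0 p u = pstarL p u := by
  rw [pstar, pstarL, Finsupp.lsum_apply]
  exact Finsupp.sum_congr fun a _ => by
    rw [LinearMap.toSpanSingleton_apply, smul_smul]

/-- `pt` as a bundled linear map. -/
def ptL (p : ℕ) : CA F ℓ Γ j0 →ₗ[F] CA F ℓ Γ j0 :=
  Finsupp.lsum F fun a => LinearMap.toSpanSingleton F _
    ((a.2.1 p : F) • X F ℓ Γ j0 a.1.1 (a.2.1 - Pi.single p 1))

lemma pt_eq (p : ℕ) (u : CA F ℓ Γ j0) :
    pt F ℓ Γ j0 p u = ptL p u := by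
  rw [pt, ptL, Finsupp.lsum_apply]
  exact Finsupp.sum_congr fun a _ => by
    rw [LinearMap.toSpanSingleton_apply, smul_smul]

/-- `mulA` as a bundled bilinear map. -/
def mulAL : CA F ℓ Γ j0 →ₗ[F] CA F ℓ Γ j0 →ₗ[F] CA F ℓ Γ j0 :=
  Finsupp.lsum F fun a => LinearMap.toSpanSingleton F _
    (Finsupp.lsum F fun b => LinearMap.toSpanSingleton F _
      (X F ℓ Γ j0 (a.1.1 + b.1.1) (a.2.1 + b.2.1)))

lemma mulA_eq (u v : CA F ℓ Γ j0) :
    mulA F ℓ Γ j0 u v = mulAL u v := by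
  rw [mulA, mulAL, Finsupp.lsum_apply, LinearMap.finsupp_sum_apply]
  refine Finsupp.sum_congr fun a _ => ?_
  rw [LinearMap.toSpanSingleton_apply, LinearMap.smul_apply, Finsupp.lsum_apply,
    Finsupp.smul_sum]
  exact Finsupp.sum_congr fun b _ => by
    rw [LinearMap.toSpanSingleton_apply, smul_smul]

lemma dmuL_single (μ0 : ↥Γ → F) (a : ↥Γ × ↥(jIdx ℓ j0)) (c : F) :
    dmuL μ0 (Finsupp.single a c) = (c * μ0 a.1) • Finsupp.single a (1 : F) := by
  rw [dmuL, Finsupp.lsum_single, LinearMap.toSpanSingleton_apply, smul_smul]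

lemma pstarL_single (p : ℕ) (a : ↥Γ × ↥(jIdx ℓ j0)) (c : F) :
    pstarL p (Finsupp.single a c) = (c * a.1.1 p) • Finsupp.single a (1 : F) := by
  rw [pstarL, Finsupp.lsum_single, LinearMap.toSpanSingleton_apply, smul_smul]

lemma ptL_single (p : ℕ) (a : ↥Γ × ↥(jIdx ℓ j0)) (c : F) :
    ptL p (Finsupp.single a c) =
      (c * (a.2.1 p : F)) • X F ℓ Γ j0 a.1.1 (a.2.1 - Pi.single p 1) := by
  rw [ptL, Finsupp.lsum_single, LinearMap.toSpanSingleton_apply, smul_smul]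

lemma mulAL_ss (a b : ↥Γ × ↥(jIdx ℓ j0)) (c d : F) :
    mulAL (Finsupp.single a c) (Finsupp.single b d) =
      (c * d) • X F ℓ Γ j0 (a.1.1 + b.1.1) (a.2.1 + b.2.1) := by
  rw [mulAL, Finsupp.lsum_single, LinearMap.toSpanSingleton_apply, LinearMap.smul_apply,
    Finsupp.lsum_single, LinearMap.toSpanSingleton_apply, smul_smul]

/-- The extension of `μ` by zero outside `Γ`. -/
def mval (μ0 : ↥Γ → F) (α : ℕ → F) : F :=
  @dite _ (α ∈ Γ) (Classical.dec _) (fun h => μ0 ⟨α, h⟩) (fun _ => 0)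

lemma mval_coe (μ0 : ↥Γ → F) (γ : ↥Γ) : mval μ0 (γ : ℕ → F) = μ0 γ := by
  rw [mval, dif_pos γ.2]

lemma dmuL_X (μ0 : ↥Γ → F) (α : ℕ → F) (i : ℕ → ℕ) :
    dmuL μ0 (X F ℓ Γ j0 α i) = mval μ0 α • X F ℓ Γ j0 α i := by
  rw [X]
  split
  · next h =>
    rw [dmuL_single, mval, dif_pos h.1, one_mul]
  · rw [map_zero, smul_zero]

variable (μ : ↥Γ →+ F)

lemma mval_zero : mval (⇑μ) (0 : ℕ → F) = 0 := by
  rw [mval, dif_pos (zero_mem Γ)]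
  exact map_zero μ

lemma mval_add {α β : ℕ → F} (hα : α ∈ Γ) (hβ : β ∈ Γ) :
    mval (⇑μ) (α + β) = mval (⇑μ) α + mval (⇑μ) β := by
  have h : α + β = ((⟨α, hα⟩ + ⟨β, hβ⟩ : ↥Γ) : ℕ → F) := rfl
  rw [h, mval_coe, map_add, mval, dif_pos hα, mval, dif_pos hβ]

lemma dmuL_pstarL (μ0 : ↥Γ → F) (p : ℕ) (u : CA F ℓ Γ j0) :
    dmuL μ0 (pstarL p u) = pstarL p (dmuL μ0 u) := by
  have h : (dmuL μ0).comp (pstarL (F := F) (ℓ := ℓ) (Γ := Γ) (j0 := j0) p) =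
      (pstarL p).comp (dmuL μ0) := by
    refine Finsupp.lhom_ext fun a c => ?_
    simp only [LinearMap.comp_apply, pstarL_single, dmuL_single, map_smul, smul_smul]
    ring_nf
  exact LinearMap.congr_fun h u

lemma dmuL_ptL (μ0 : ↥Γ → F) (p : ℕ) (u : CA F ℓ Γ j0) :
    dmuL μ0 (ptL p u) = ptL p (dmuL μ0 u) := by
  have h : (dmuL μ0).comp (ptL (F := F) (ℓ := ℓ) (Γ := Γ) (j0 := j0) p) =
      (ptL p).comp (dmuL μ0) := by
    refine Finsupp.lhom_ext fun a c => ?_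
    simp only [LinearMap.comp_apply, ptL_single, dmuL_single, map_smul, dmuL_X,
      mval_coe, smul_smul]
    ring_nf
  exact LinearMap.congr_fun h u

lemma dmuL_dd (p : ℕ) (u : CA F ℓ Γ j0) :
    dmuL (⇑μ) (dd F ℓ Γ j0 p u) = dd F ℓ Γ j0 p (dmuL (⇑μ) u) := by
  rw [dd, dd, pstar_eq, pstar_eq, pt_eq, pt_eq, map_add, dmuL_pstarL, dmuL_ptL]

lemma dmuL_ss (a b : ↥Γ × ↥(jIdx ℓ j0)) (c d : F) :
    dmuL (⇑μ) (mulAL (Finsupp.single a c) (Finsupp.single b d)) =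
      mulAL (dmuL (⇑μ) (Finsupp.single a c)) (Finsupp.single b d) +
        mulAL (Finsupp.single a c) (dmuL (⇑μ) (Finsupp.single b d)) := by
  rw [mulAL_ss, map_smul, dmuL_X, mval_add μ a.1.2 b.1.2, mval_coe, mval_coe,
    dmuL_single, dmuL_single, map_smul, LinearMap.smul_apply, map_smul, mulAL_ss,
    mulAL_ss]
  simp only [smul_smul]
  rw [← add_smul]
  congr 1
  ring

lemma dmuL_mulAL_single (a : ↥Γ × ↥(jIdx ℓ j0)) (c : F) (v : CA F ℓ Γ j0) :
    dmuL (⇑μ) (mulAL (Finsupp.single a c) v) =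
      mulAL (dmuL (⇑μ) (Finsupp.single a c)) v +
        mulAL (Finsupp.single a c) (dmuL (⇑μ) v) := by
  induction v using Finsupp.induction with
  | zero => simp
  | single_add b d g hbg hd ih2 =>
    simp only [map_add, LinearMap.add_apply] at ih2 ⊢
    rw [ih2, dmuL_ss]
    abel

lemma dmuL_mulAL (u v : CA F ℓ Γ j0) :
    dmuL (⇑μ) (mulAL u v) =
      mulAL (dmuL (⇑μ) u) v + mulAL u (dmuL (⇑μ) v) := by
  induction u using Finsupp.induction with
  | zero => simp
  | single_add a c f haf hc ih =>
    simp only [map_add, LinearMap.add_apply]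
    rw [ih, dmuL_mulAL_single]
    abel

lemma dmuL_mulA (u v : CA F ℓ Γ j0) :
    dmuL (⇑μ) (mulA F ℓ Γ j0 u v) =
      mulA F ℓ Γ j0 (dmuL (⇑μ) u) v + mulA F ℓ Γ j0 u (dmuL (⇑μ) v) := by
  rw [mulA_eq, mulA_eq, mulA_eq, dmuL_mulAL]

lemma iot_mono {i j : ℕ} (hij : i ≤ j) : iot ℓ i ≤ iot ℓ j := by
  exact Finset.sum_le_sum_of_subset (Finset.Icc_subset_Icc_right hij)

lemma mval_sgm
    (hμσ : ∀ p ∈ iSet ℓ 1 5, ∀ h : sgm F ℓ p ∈ Γ, μ ⟨sgm F ℓ p, h⟩ = 0)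
    (p : ℕ) (hp : p ∈ iSet ℓ 1 6) : mval (⇑μ) (sgm F ℓ p) = 0 := by
  by_cases hp5 : p ∈ iSet ℓ 1 5
  · rw [mval]
    split
    · next h => exact hμσ p hp5 h
    · rfl
  · have hz : sgm F ℓ p = 0 := by
      rw [iSet, Finset.mem_Icc] at hp hp5
      have hle : p ≤ iot ℓ 6 := hp.2
      have h5 : ¬ p ≤ iot ℓ 5 := fun h => hp5 ⟨hp.1, h⟩
      rw [sgm]
      simp only [hle, if_true]
      rw [if_neg, if_neg]
      · rw [iSet, Finset.mem_Icc]
        intro h45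
        exact h5 h45.2
      · rw [iSet, Finset.mem_Icc]
        intro h13
        exact h5 (le_trans h13.2 (iot_mono (by norm_num)))
    rw [hz, mval_zero]

lemma dmuL_Dop (u : CA F ℓ Γ j0) :
    dmuL (⇑μ) (Dop F ℓ Γ j0 u) = Dop F ℓ Γ j0 (dmuL (⇑μ) u) := by
  rw [Dop, Dop, map_add, map_sum, map_sum]
  congr 1
  · refine Finset.sum_congr rfl fun p _ => ?_
    rw [pstar_eq, pstar_eq, dmuL_pstarL]
  · refine Finset.sum_congr rfl fun p _ => ?_
    rw [dmuL_mulA, dmuL_X, mval_zero, zero_smul, mulA_eq, map_zero,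
      LinearMap.zero_apply, zero_add, pt_eq, pt_eq, dmuL_ptL]

end DerivAux

/-- For every additive group homomorphism `μ : Γ → F` with `μ(σ_p) = 0` for
all `p ∈ I_{1,5}`, the linear map `d_μ` defined on the basis by
`d_μ(x^{α,i⃗}) = μ(α)x^{α,i⃗}` is a derivation of the contact Lie algebra `𝒦`. -/
theorem dmu_is_derivation
    {F : Type*} [Field F] [CharZero F] (ℓ : ℕ → ℕ) (Γ : AddSubgroup (ℕ → F)) (j0 : Bool)
    (hℓ : 0 < iot ℓ 6)
    (hΓ1 : ∀ p ∈ jSet ℓ 1 3 ∪ iSet ℓ 4 5, (Pi.single p (1 : F) : ℕ → F) ∈ Γ)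
    (hΓ2 : ∀ α ∈ Γ, ∀ p ∈ iSet ℓ 6 6 ∪ barSet ℓ (iSet ℓ 4 6), α p = 0)
    (hΓ3 : ∀ α ∈ Γ, ∀ p, 2 * iot ℓ 6 < p → α p = 0)
    (hΓ0 : (∃ α ∈ Γ, α 0 ≠ 0) → (Pi.single 0 (1 : F) : ℕ → F) ∈ Γ)
    (hJ0 : j0 = false → ∃ α ∈ Γ, α 0 ≠ 0)
    (μ : ↥Γ →+ F)
    (hμσ : ∀ p ∈ iSet ℓ 1 5, ∀ h : sgm F ℓ p ∈ Γ, μ ⟨sgm F ℓ p, h⟩ = 0) :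
    ∀ u v : CA F ℓ Γ j0,
      dmu F ℓ Γ j0 (⇑μ) (brk F ℓ Γ j0 u v) =
        brk F ℓ Γ j0 (dmu F ℓ Γ j0 (⇑μ) u) v + brk F ℓ Γ j0 u (dmu F ℓ Γ j0 (⇑μ) v) := by
  intro u v
  rw [dmu_eq, dmu_eq, dmu_eq]
  simp only [brk, mulA_eq]
  rw [map_sub, map_add, map_sum]
  have hsum : ∀ p ∈ iSet ℓ 1 6,
      dmuL (⇑μ) (mulAL (X F ℓ Γ j0 (sgm F ℓ p) 0)
        (mulAL (dd F ℓ Γ j0 p u) (dd F ℓ Γ j0 (bar ℓ p) v) -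
          mulAL (dd F ℓ Γ j0 (bar ℓ p) u) (dd F ℓ Γ j0 p v))) =
      (mulAL (X F ℓ Γ j0 (sgm F ℓ p) 0)
        (mulAL (dd F ℓ Γ j0 p (dmuL (⇑μ) u)) (dd F ℓ Γ j0 (bar ℓ p) v) -
          mulAL (dd F ℓ Γ j0 (bar ℓ p) (dmuL (⇑μ) u)) (dd F ℓ Γ j0 p v))) +
      (mulAL (X F ℓ Γ j0 (sgm F ℓ p) 0)
        (mulAL (dd F ℓ Γ j0 p u) (dd F ℓ Γ j0 (bar ℓ p) (dmuL (⇑μ) v)) -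
          mulAL (dd F ℓ Γ j0 (bar ℓ p) u) (dd F ℓ Γ j0 p (dmuL (⇑μ) v)))) := by
    intro p hp
    rw [dmuL_mulAL, dmuL_X, mval_sgm μ hμσ p hp, zero_smul, map_zero,
      LinearMap.zero_apply, zero_add, map_sub, dmuL_mulAL, dmuL_mulAL]
    simp only [dmuL_dd]
    rw [← map_add]
    congr 1
    abel
  rw [Finset.sum_congr rfl hsum, Finset.sum_add_distrib]
  have hP : dmuL (⇑μ) (mulAL ((2 : F) • u - Dop F ℓ Γ j0 u) (dd F ℓ Γ j0 0 v)) =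
      mulAL ((2 : F) • dmuL (⇑μ) u - Dop F ℓ Γ j0 (dmuL (⇑μ) u)) (dd F ℓ Γ j0 0 v) +
        mulAL ((2 : F) • u - Dop F ℓ Γ j0 u) (dd F ℓ Γ j0 0 (dmuL (⇑μ) v)) := by
    have h1 : dmuL (⇑μ) ((2 : F) • u - Dop F ℓ Γ j0 u) =
        (2 : F) • dmuL (⇑μ) u - Dop F ℓ Γ j0 (dmuL (⇑μ) u) := by
      rw [map_sub, map_smul, dmuL_Dop]
    rw [dmuL_mulAL, h1, dmuL_dd]
  have hQ : dmuL (⇑μ) (mulAL (dd F ℓ Γ j0 0 u) ((2 : F) • v - Dop F ℓ Γ j0 v)) =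
      mulAL (dd F ℓ Γ j0 0 (dmuL (⇑μ) u)) ((2 : F) • v - Dop F ℓ Γ j0 v) +
        mulAL (dd F ℓ Γ j0 0 u)
          ((2 : F) • dmuL (⇑μ) v - Dop F ℓ Γ j0 (dmuL (⇑μ) v)) := by
    have h2 : dmuL (⇑μ) ((2 : F) • v - Dop F ℓ Γ j0 v) =
        (2 : F) • dmuL (⇑μ) v - Dop F ℓ Γ j0 (dmuL (⇑μ) v) := by
      rw [map_sub, map_smul, dmuL_Dop]
    rw [dmuL_mulAL, h2, dmuL_dd]
  rw [hP, hQ]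
  abel

end
end

section
/- For every p∈I_{1,3}, the operator identity d_{μ_p} = ad x^{−σ_p} + ∂_{t_p} − ∂_{t_{p̄}} holds on 𝒦, where μ_p:Γ→F is the homomorphism μ_p(α)=α_{p̄}−α_p and d_{μ_p}(x^{α,i⃗})=μ_p(α)x^{α,i⃗}. -/
noncomputable section

variable (F : Type*) [Field F] (ℓ : ℕ → ℕ) (Γ : AddSubgroup (ℕ → F)) (j0 : Bool)

section Aux

variable {F : Type*} [Field F] (ℓ : ℕ → ℕ) (Γ : AddSubgroup (ℕ → F)) (j0 : Bool)

lemma zero_mem_jIdx : (0 : ℕ → ℕ) ∈ jIdx ℓ j0 :=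
  ⟨fun _ => rfl, fun _ _ _ => rfl⟩

lemma X_of_mem {α : ℕ → F} {i : ℕ → ℕ} (hα : α ∈ Γ) (hi : i ∈ jIdx ℓ j0) :
    X F ℓ Γ j0 α i = Finsupp.single (⟨α, hα⟩, ⟨i, hi⟩) 1 := by
  unfold X
  rw [dif_pos ⟨hα, hi⟩]

lemma mulA_zero_left (v : CA F ℓ Γ j0) : mulA F ℓ Γ j0 0 v = 0 :=
  Finsupp.sum_zero_index

lemma mulA_zero_right (u : CA F ℓ Γ j0) : mulA F ℓ Γ j0 u 0 = 0 := by
  unfold mulA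
  simp [Finsupp.sum_zero_index]

lemma mulA_add_right (u v w : CA F ℓ Γ j0) :
    mulA F ℓ Γ j0 u (v + w) = mulA F ℓ Γ j0 u v + mulA F ℓ Γ j0 u w := by
  unfold mulA
  rw [← Finsupp.sum_add]
  refine Finsupp.sum_congr fun a _ => ?_
  rw [Finsupp.sum_add_index' (fun b => by simp) (fun b c₁ c₂ => by rw [mul_add, add_smul])]

/-- `mulA u` as an additive monoid hom in the second variable. -/
def mulAhom (u : CA F ℓ Γ j0) : CA F ℓ Γ j0 →+ CA F ℓ Γ j0 :=
  AddMonoidHom.mk' (mulA F ℓ Γ j0 u) (mulA_add_right ℓ Γ j0 u)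

lemma mulA_smul_right (u : CA F ℓ Γ j0) (c : F) (v : CA F ℓ Γ j0) :
    mulA F ℓ Γ j0 u (c • v) = c • mulA F ℓ Γ j0 u v := by
  unfold mulA
  rw [Finsupp.smul_sum]
  refine Finsupp.sum_congr fun a _ => ?_
  rw [Finsupp.sum_smul_index' (fun b => by simp), Finsupp.smul_sum]
  refine Finsupp.sum_congr fun b _ => ?_
  rw [smul_smul, smul_eq_mul, mul_left_comm]

lemma mulA_X_left (e : ℕ → F) (he : e ∈ Γ) (v : CA F ℓ Γ j0) :
    mulA F ℓ Γ j0 (X F ℓ Γ j0 e 0) v =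
      v.sum fun b cb => cb • X F ℓ Γ j0 (e + b.1.1) b.2.1 := by
  rw [X_of_mem ℓ Γ j0 he (zero_mem_jIdx ℓ j0)]
  unfold mulA
  rw [Finsupp.sum_single_index (by simp)]
  exact Finsupp.sum_congr fun b _ => by rw [one_mul, zero_add]

lemma mulA_X_cancel (e : ℕ → F) (he : e ∈ Γ) (hne : -e ∈ Γ) (v : CA F ℓ Γ j0) :
    mulA F ℓ Γ j0 (X F ℓ Γ j0 (-e) 0) (mulA F ℓ Γ j0 (X F ℓ Γ j0 e 0) v) = v := by
  rw [mulA_X_left ℓ Γ j0 e he v]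
  have hmap : mulA F ℓ Γ j0 (X F ℓ Γ j0 (-e) 0)
      (v.sum fun b cb => cb • X F ℓ Γ j0 (e + b.1.1) b.2.1) =
      v.sum fun b cb =>
        mulA F ℓ Γ j0 (X F ℓ Γ j0 (-e) 0) (cb • X F ℓ Γ j0 (e + b.1.1) b.2.1) :=
    map_finsuppSum (mulAhom ℓ Γ j0 (X F ℓ Γ j0 (-e) 0)) v _
  rw [hmap]
  conv_rhs => rw [← Finsupp.sum_single v]
  refine Finsupp.sum_congr fun b _ => ?_
  rw [mulA_smul_right, mulA_X_left ℓ Γ j0 (-e) hne,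
    X_of_mem ℓ Γ j0 (Γ.add_mem he b.1.2) b.2.2,
    Finsupp.sum_single_index (by simp), one_smul, neg_add_cancel_left]
  rw [X_of_mem ℓ Γ j0 b.1.2 b.2.2, Finsupp.smul_single, smul_eq_mul, mul_one]

lemma pstar_X (q : ℕ) {α : ℕ → F} {i : ℕ → ℕ} (hα : α ∈ Γ) (hi : i ∈ jIdx ℓ j0) :
    pstar F ℓ Γ j0 q (X F ℓ Γ j0 α i) = α q • X F ℓ Γ j0 α i := by
  rw [X_of_mem ℓ Γ j0 hα hi]
  unfold pstar
  rw [Finsupp.sum_single_index (by simp), one_mul]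

lemma pt_X_zero (q : ℕ) {α : ℕ → F} (hα : α ∈ Γ) :
    pt F ℓ Γ j0 q (X F ℓ Γ j0 α 0) = 0 := by
  rw [X_of_mem ℓ Γ j0 hα (zero_mem_jIdx ℓ j0)]
  unfold pt
  rw [Finsupp.sum_single_index (by simp)]
  simp

lemma dd_X_zero (q : ℕ) {α : ℕ → F} (hα : α ∈ Γ) :
    dd F ℓ Γ j0 q (X F ℓ Γ j0 α 0) = α q • X F ℓ Γ j0 α 0 := by
  unfold dd
  rw [pstar_X ℓ Γ j0 q hα (zero_mem_jIdx ℓ j0), pt_X_zero ℓ Γ j0 q hα, add_zero]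

lemma dmu_eq_pstar_sub (pb p : ℕ) (u : CA F ℓ Γ j0) :
    dmu F ℓ Γ j0 (fun a => a.1 pb - a.1 p) u =
      pstar F ℓ Γ j0 pb u - pstar F ℓ Γ j0 p u := by
  unfold dmu pstar
  rw [← Finsupp.sum_sub]
  exact Finsupp.sum_congr fun a _ => by rw [mul_sub, sub_smul]

end Aux

/-- For every `p ∈ I_{1,3}`, the operator identity
`d_{μ_p} = ad x^{−σ_p} + ∂_{t_p} − ∂_{t_{p̄}}` holds on `𝒦`, where
`μ_p(α) = α_{p̄} − α_p` and `d_{μ_p}(x^{α,i⃗}) = μ_p(α) x^{α,i⃗}`. -/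
theorem dmu_p_eq_ad_add_pt_sub_pt
    {F : Type*} [Field F] [CharZero F] (ℓ : ℕ → ℕ) (Γ : AddSubgroup (ℕ → F)) (j0 : Bool)
    (hℓ : 0 < iot ℓ 6)
    (hΓ1 : ∀ p ∈ jSet ℓ 1 3 ∪ iSet ℓ 4 5, (Pi.single p (1 : F) : ℕ → F) ∈ Γ)
    (hΓ2 : ∀ α ∈ Γ, ∀ p ∈ iSet ℓ 6 6 ∪ barSet ℓ (iSet ℓ 4 6), α p = 0)
    (hΓ3 : ∀ α ∈ Γ, ∀ p, 2 * iot ℓ 6 < p → α p = 0)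
    (hΓ0 : (∃ α ∈ Γ, α 0 ≠ 0) → (Pi.single 0 (1 : F) : ℕ → F) ∈ Γ)
    (hJ0 : j0 = false → ∃ α ∈ Γ, α 0 ≠ 0) :
    ∀ p ∈ iSet ℓ 1 3, ∀ u : CA F ℓ Γ j0,
      dmu F ℓ Γ j0 (fun a => a.1 (bar ℓ p) - a.1 p) u =
        brk F ℓ Γ j0 (X F ℓ Γ j0 (-sgm F ℓ p) 0) u +
          pt F ℓ Γ j0 p u - pt F ℓ Γ j0 (bar ℓ p) u := by
  intro p hp u
  have hp13 : iot ℓ 0 + 1 ≤ p ∧ p ≤ iot ℓ 3 := Finset.mem_Icc.1 hp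
  have hι0 : iot ℓ 0 = 0 := by simp [iot]
  have hp1 : 1 ≤ p := by omega
  have h36 : iot ℓ 3 ≤ iot ℓ 6 :=
    Finset.sum_le_sum_of_subset (Finset.Icc_subset_Icc_right (by norm_num))
  have hp6 : p ≤ iot ℓ 6 := le_trans hp13.2 h36
  have hbar : bar ℓ p = p + iot ℓ 6 := if_pos hp6
  set e : ℕ → F := Pi.single p 1 + Pi.single (p + iot ℓ 6) 1 with he_def
  have hsgm : sgm F ℓ p = -e := by
    simp only [sgm]
    rw [if_pos hp6, if_pos hp, he_def]
    ring
  have hppb : ¬ (p = p + iot ℓ 6) := by omega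
  have hpbp : ¬ (p + iot ℓ 6 = p) := by omega
  have hep : e p = 1 := by simp [he_def, Pi.single_apply, hppb, hℓ.ne']
  have hepb : e (p + iot ℓ 6) = 1 := by simp [he_def, Pi.single_apply, hpbp, hℓ.ne']
  have he0 : e 0 = 0 := by
    have h1 : ¬ ((0:ℕ) = p) := by omega
    have h2 : ¬ ((0:ℕ) = p + iot ℓ 6) := by omega
    simp [he_def, Pi.single_apply, h1, h2]
  have hpJ : p ∈ jSet ℓ 1 3 ∪ iSet ℓ 4 5 :=
    Finset.mem_union_left _ (Finset.mem_union_left _ hp)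
  have hpbJ : p + iot ℓ 6 ∈ jSet ℓ 1 3 ∪ iSet ℓ 4 5 := by
    refine Finset.mem_union_left _ (Finset.mem_union_right _ ?_)
    exact Finset.mem_image.2 ⟨p, hp, hbar⟩
  have heΓ : e ∈ Γ := Γ.add_mem (hΓ1 p hpJ) (hΓ1 _ hpbJ)
  have hneΓ : -e ∈ Γ := Γ.neg_mem heΓ
  set w : CA F ℓ Γ j0 := X F ℓ Γ j0 e 0 with hw_def
  have hXw : X F ℓ Γ j0 (-sgm F ℓ p) 0 = w := by rw [hsgm, neg_neg]
  have hdw : ∀ q, dd F ℓ Γ j0 q w = e q • w := fun q => dd_X_zero ℓ Γ j0 q heΓ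
  have hptw : ∀ q, pt F ℓ Γ j0 q w = 0 := fun q => pt_X_zero ℓ Γ j0 q heΓ
  -- Dop w = 2 • w
  have hDop : Dop F ℓ Γ j0 w = (2 : F) • w := by
    unfold Dop
    have h1 : ∀ q ∈ jSet ℓ 1 3 ∪ iSet ℓ 4 5,
        pstar F ℓ Γ j0 q w = e q • w := fun q _ =>
      pstar_X ℓ Γ j0 q heΓ (zero_mem_jIdx ℓ j0)
    rw [Finset.sum_congr rfl h1, ← Finset.sum_smul]
    have hsum : ∑ q ∈ jSet ℓ 1 3 ∪ iSet ℓ 4 5, e q = 2 := by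
      simp only [he_def, Pi.add_apply, Pi.single_apply, Finset.sum_add_distrib,
        Finset.sum_ite_eq', if_pos hpJ, if_pos hpbJ]
      norm_num
    rw [hsum]
    have h2 : ∀ q ∈ iSet ℓ 6 6 ∪ barSet ℓ (iSet ℓ 4 6),
        mulA F ℓ Γ j0 (X F ℓ Γ j0 0 (Pi.single q 1)) (pt F ℓ Γ j0 q w) = 0 := fun q _ => by
      rw [hptw q, mulA_zero_right]
    rw [Finset.sum_congr rfl h2, Finset.sum_const_zero, add_zero]
  have hdd0w : dd F ℓ Γ j0 0 w = 0 := by rw [hdw 0, he0, zero_smul]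
  -- the main sum
  have hmain : (∑ q ∈ iSet ℓ 1 6,
      mulA F ℓ Γ j0 (X F ℓ Γ j0 (sgm F ℓ q) 0)
        (mulA F ℓ Γ j0 (dd F ℓ Γ j0 q w) (dd F ℓ Γ j0 (bar ℓ q) u) -
          mulA F ℓ Γ j0 (dd F ℓ Γ j0 (bar ℓ q) w) (dd F ℓ Γ j0 q u))) =
      dd F ℓ Γ j0 (bar ℓ p) u - dd F ℓ Γ j0 p u := by
    rw [Finset.sum_eq_single p]
    · rw [hbar, hdw p, hdw (p + iot ℓ 6), hep, hepb, one_smul, hsgm, hw_def]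
      rw [show mulA F ℓ Γ j0 (X F ℓ Γ j0 e 0) (dd F ℓ Γ j0 (p + iot ℓ 6) u) -
            mulA F ℓ Γ j0 (X F ℓ Γ j0 e 0) (dd F ℓ Γ j0 p u) =
          mulAhom ℓ Γ j0 (X F ℓ Γ j0 e 0) (dd F ℓ Γ j0 (p + iot ℓ 6) u) -
            mulAhom ℓ Γ j0 (X F ℓ Γ j0 e 0) (dd F ℓ Γ j0 p u) from rfl,
        ← map_sub]
      exact mulA_X_cancel ℓ Γ j0 e heΓ hneΓ _
    · intro q hq hqp
      have hq16 : iot ℓ 0 + 1 ≤ q ∧ q ≤ iot ℓ 6 := Finset.mem_Icc.1 hq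
      have hbq : bar ℓ q = q + iot ℓ 6 := if_pos hq16.2
      have heq : e q = 0 := by
        have h1 : ¬ (q = p) := hqp
        have h2 : ¬ (q = p + iot ℓ 6) := by omega
        simp [he_def, Pi.single_apply, h1, h2]
      have heqb : e (q + iot ℓ 6) = 0 := by
        have h1 : ¬ (q + iot ℓ 6 = p) := by omega
        have h2 : ¬ (q + iot ℓ 6 = p + iot ℓ 6) := by
          intro h; exact hqp (by omega)
        simp [he_def, Pi.single_apply, h1, h2, hqp]
      rw [hbq, hdw q, hdw (q + iot ℓ 6), heq, heqb, zero_smul,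
        mulA_zero_left, mulA_zero_left, sub_zero, mulA_zero_right]
    · intro hcon
      exact absurd (Finset.mem_Icc.2 ⟨hp13.1, hp6⟩) hcon
  unfold brk
  rw [hXw, hmain, hDop, sub_self, mulA_zero_left, hdd0w, mulA_zero_left,
    dmu_eq_pstar_sub]
  unfold dd
  abel

end
end
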